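/- arXiv:1812.09097 — 8 statements merged into one kernel-verified Lean document; each statement's English description precedes it below -/
import Mathlib

section
/- For all μ₁, μ₂ > 0 with μ₁ ≠ μ₂, the value v = (√2/3)·(μ₁^{3/2} − μ₂^{3/2})/(μ₁ − μ₂) satisfies h(v) = 0, where h(v) = √(√(2μ₁) + v)·(2v − √(2μ₁)) + √(√(2μ₂) + v)·(2v − √(2μ₂)). Moreover, for μ₁ = μ₂ = μ > 0, v = √(μ/2) satisfies h(v) = 0. -/
open Real

theorem stmt_2 (μ₁ μ₂ : ℝ) (h₁ : 0 < μ₁) (h₂ : 0 < μ₂) :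
    (μ₁ ≠ μ₂ →
      Real.sqrt (Real.sqrt (2 * μ₁) + (Real.sqrt 2 / 3 * (μ₁ ^ (3 / 2 : ℝ) - μ₂ ^ (3 / 2 : ℝ)) / (μ₁ - μ₂))) *
          (2 * (Real.sqrt 2 / 3 * (μ₁ ^ (3 / 2 : ℝ) - μ₂ ^ (3 / 2 : ℝ)) / (μ₁ - μ₂)) - Real.sqrt (2 * μ₁)) +
        Real.sqrt (Real.sqrt (2 * μ₂) + (Real.sqrt 2 / 3 * (μ₁ ^ (3 / 2 : ℝ) - μ₂ ^ (3 / 2 : ℝ)) / (μ₁ - μ₂))) *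
          (2 * (Real.sqrt 2 / 3 * (μ₁ ^ (3 / 2 : ℝ) - μ₂ ^ (3 / 2 : ℝ)) / (μ₁ - μ₂)) - Real.sqrt (2 * μ₂)) = 0) ∧
    (μ₁ = μ₂ →
      Real.sqrt (Real.sqrt (2 * μ₁) + Real.sqrt (μ₁ / 2)) * (2 * Real.sqrt (μ₁ / 2) - Real.sqrt (2 * μ₁)) +
        Real.sqrt (Real.sqrt (2 * μ₂) + Real.sqrt (μ₁ / 2)) * (2 * Real.sqrt (μ₁ / 2) - Real.sqrt (2 * μ₂)) = 0) := by
  constructor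
  · intro hne
    set a := Real.sqrt (2 * μ₁) with ha_def
    set b := Real.sqrt (2 * μ₂) with hb_def
    have ha : 0 < a := Real.sqrt_pos.mpr (by linarith)
    have hb : 0 < b := Real.sqrt_pos.mpr (by linarith)
    have ha2 : a ^ 2 = 2 * μ₁ := Real.sq_sqrt (by linarith)
    have hb2 : b ^ 2 = 2 * μ₂ := Real.sq_sqrt (by linarith)
    have hab : a ≠ b := by
      intro h
      apply hne
      have : a ^ 2 = b ^ 2 := by rw [h]
      rw [ha2, hb2] at this; linarith
    have h2 : (Real.sqrt 2) ^ 2 = 2 := Real.sq_sqrt (by norm_num)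
    have h2pos : 0 < Real.sqrt 2 := Real.sqrt_pos.mpr (by norm_num)
    have hsa : Real.sqrt μ₁ = a / Real.sqrt 2 := by
      rw [ha_def, Real.sqrt_mul (by norm_num)]
      field_simp
    have hsb : Real.sqrt μ₂ = b / Real.sqrt 2 := by
      rw [hb_def, Real.sqrt_mul (by norm_num)]
      field_simp
    have hr1 : μ₁ ^ (3 / 2 : ℝ) = μ₁ * Real.sqrt μ₁ := by
      rw [show (3/2 : ℝ) = 1 + 1/2 by norm_num, Real.rpow_add h₁, Real.rpow_one,
        Real.sqrt_eq_rpow]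
    have hr2 : μ₂ ^ (3 / 2 : ℝ) = μ₂ * Real.sqrt μ₂ := by
      rw [show (3/2 : ℝ) = 1 + 1/2 by norm_num, Real.rpow_add h₂, Real.rpow_one,
        Real.sqrt_eq_rpow]
    have hm1 : μ₁ = a ^ 2 / 2 := by linarith
    have hm2 : μ₂ = b ^ 2 / 2 := by linarith
    have hdiff : μ₁ - μ₂ ≠ 0 := sub_ne_zero.mpr hne
    have habne : a - b ≠ 0 := sub_ne_zero.mpr hab
    have key : Real.sqrt 2 / 3 * (μ₁ ^ (3 / 2 : ℝ) - μ₂ ^ (3 / 2 : ℝ)) / (μ₁ - μ₂)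
        = (a ^ 2 + a * b + b ^ 2) / (3 * (a + b)) := by
      rw [hr1, hr2, hsa, hsb]
      rw [hm1, hm2] at hdiff ⊢
      have hden : a ^ 2 - b ^ 2 ≠ 0 := by
        intro h; apply hdiff; linarith
      field_simp
      ring
    rw [key]
    set s := Real.sqrt (3 * (a + b)) with hs_def
    have hs0 : 0 < s := Real.sqrt_pos.mpr (by linarith)
    have hs2 : s ^ 2 = 3 * (a + b) := Real.sq_sqrt (by linarith)
    have e1 : Real.sqrt (a + (a ^ 2 + a * b + b ^ 2) / (3 * (a + b)))
        = (2 * a + b) / s := by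
      have h : a + (a ^ 2 + a * b + b ^ 2) / (3 * (a + b)) = ((2 * a + b) / s) ^ 2 := by
        rw [div_pow, hs2]
        field_simp
        ring
      rw [h, Real.sqrt_sq (by positivity)]
    have e2 : Real.sqrt (b + (a ^ 2 + a * b + b ^ 2) / (3 * (a + b)))
        = (a + 2 * b) / s := by
      have h : b + (a ^ 2 + a * b + b ^ 2) / (3 * (a + b)) = ((a + 2 * b) / s) ^ 2 := by
        rw [div_pow, hs2]
        field_simp
        ring
      rw [h, Real.sqrt_sq (by positivity)]
    rw [e1, e2]
    field_simp
    ring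
  · intro heq
    subst heq
    have : Real.sqrt (2 * μ₁) = 2 * Real.sqrt (μ₁ / 2) := by
      rw [show (2 : ℝ) * μ₁ = 2 ^ 2 * (μ₁ / 2) by ring, Real.sqrt_mul (by positivity),
        Real.sqrt_sq (by norm_num)]
    rw [this]
    ring
end

section
/- For any fixed μ₁, μ₂ ≥ 0, the function h(v) = √(√(2μ₁)+v)·(2v−√(2μ₁)) + √(√(2μ₂)+v)·(2v−√(2μ₂)) is strictly monotone increasing on [0,∞), so for each λ ≥ 0 the equation h(v) = √6·λ has at most one solution v ≥ 0. -/
lemma aux_mono (a : ℝ) (ha : 0 ≤ a) :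
    StrictMonoOn (fun v : ℝ => Real.sqrt (a + v) * (2 * v - a)) (Set.Ici 0) := by
  intro x hx y hy hxy
  simp only [Set.mem_Ici] at hx hy
  set p := Real.sqrt (a + x) with hpdef
  set q := Real.sqrt (a + y) with hqdef
  have hp : p ^ 2 = a + x := Real.sq_sqrt (by linarith)
  have hq : q ^ 2 = a + y := Real.sq_sqrt (by linarith)
  have hp0 : 0 ≤ p := Real.sqrt_nonneg _
  have hq0 : 0 ≤ q := Real.sqrt_nonneg _
  have hpq : p < q := Real.sqrt_lt_sqrt (by linarith) (by linarith)
  show p * (2 * x - a) < q * (2 * y - a)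
  nlinarith [mul_pos (sub_pos.2 hpq) (sub_pos.2 hpq), mul_nonneg hp0 hq0,
    mul_nonneg (le_of_lt (sub_pos.2 hpq)) (mul_nonneg hp0 hq0), sq_nonneg (p + q)]

theorem stmt_3 (μ₁ μ₂ : ℝ) (h₁ : 0 ≤ μ₁) (h₂ : 0 ≤ μ₂) :
    StrictMonoOn (fun v : ℝ =>
      Real.sqrt (Real.sqrt (2 * μ₁) + v) * (2 * v - Real.sqrt (2 * μ₁)) +
      Real.sqrt (Real.sqrt (2 * μ₂) + v) * (2 * v - Real.sqrt (2 * μ₂))) (Set.Ici 0) ∧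
    ∀ lam : ℝ, 0 ≤ lam → ∀ v₁ v₂ : ℝ, 0 ≤ v₁ → 0 ≤ v₂ →
      Real.sqrt (Real.sqrt (2 * μ₁) + v₁) * (2 * v₁ - Real.sqrt (2 * μ₁)) +
        Real.sqrt (Real.sqrt (2 * μ₂) + v₁) * (2 * v₁ - Real.sqrt (2 * μ₂)) = Real.sqrt 6 * lam →
      Real.sqrt (Real.sqrt (2 * μ₁) + v₂) * (2 * v₂ - Real.sqrt (2 * μ₁)) +
        Real.sqrt (Real.sqrt (2 * μ₂) + v₂) * (2 * v₂ - Real.sqrt (2 * μ₂)) = Real.sqrt 6 * lam →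
      v₁ = v₂ := by
  have hmono := (aux_mono (Real.sqrt (2 * μ₁)) (Real.sqrt_nonneg _)).add
    (aux_mono (Real.sqrt (2 * μ₂)) (Real.sqrt_nonneg _))
  refine ⟨hmono, ?_⟩
  intro lam _ v₁ v₂ hv₁ hv₂ he₁ he₂
  exact hmono.injOn hv₁ hv₂ (by simpa using he₁.trans he₂.symm)
end

section
/- Define g(s₁, s₂) = (1/(2√(2π)))·(s₁ + s₂)^{−5/2} for s₁, s₂ > 0. Then for all μ₁, μ₂ > 0 with μ₁ ≠ μ₂, the double integral ∫₀^∞∫₀^∞ g(s₁,s₂)(1 − e^{−μ₁s₁−μ₂s₂}) ds₁ ds₂ equals (√2/3)·(μ₁^{3/2} − μ₂^{3/2})/(μ₁ − μ₂). -/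
open MeasureTheory Real Set Filter Topology

namespace Stmt5Aux

lemma one_sub_exp_neg_le {y : ℝ} (hy : 0 ≤ y) : 1 - Real.exp (-y) ≤ y := by
  nlinarith [Real.add_one_le_exp (-y)]

lemma one_sub_exp_neg_nonneg (y : ℝ) : 0 ≤ 1 - Real.exp (-y) ∨ True := .inr trivial

lemma one_sub_exp_nonneg {y : ℝ} (hy : 0 ≤ y) : 0 ≤ 1 - Real.exp (-y) := by
  have : Real.exp (-y) ≤ Real.exp 0 := Real.exp_le_exp.2 (by linarith)
  simpa using this

lemma sub_one_add_exp_nonneg {y : ℝ} (hy : 0 ≤ y) : 0 ≤ y - 1 + Real.exp (-y) := by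
  nlinarith [Real.add_one_le_exp (-y)]

lemma sub_one_add_exp_le_sq {y : ℝ} (hy : 0 ≤ y) : y - 1 + Real.exp (-y) ≤ y ^ 2 / 2 := by
  have hd : ∀ t ∈ Set.uIcc (0:ℝ) y, HasDerivAt (fun t : ℝ => t - 1 + Real.exp (-t))
      (1 - Real.exp (-t)) t := by
    intro t _
    have h1 : HasDerivAt (fun t : ℝ => Real.exp (-t)) (Real.exp (-t) * (-1)) t :=
      ((hasDerivAt_id t).neg).exp
    have h2 : HasDerivAt (fun t : ℝ => t - 1) 1 t := (hasDerivAt_id t).sub_const 1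
    exact (h2.add h1).congr_deriv (by ring)
  have hint : IntervalIntegrable (fun t : ℝ => 1 - Real.exp (-t)) volume 0 y :=
    (continuous_const.sub (Real.continuous_exp.comp continuous_neg)).intervalIntegrable 0 y
  have key : ∫ t in (0:ℝ)..y, (1 - Real.exp (-t)) = y - 1 + Real.exp (-y) := by
    rw [intervalIntegral.integral_eq_sub_of_hasDerivAt hd hint]
    simp
  have mono : ∫ t in (0:ℝ)..y, (1 - Real.exp (-t)) ≤ ∫ t in (0:ℝ)..y, t := by
    apply intervalIntegral.integral_mono_on hy hint (continuous_id.intervalIntegrable 0 y)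
    intro t ht
    exact one_sub_exp_neg_le ht.1
  rw [key] at mono
  simpa [integral_id] using mono

/-- generic splitting lemma for integrability on `Ioi 0` -/
lemma integrableOn_Ioi_of_bounds {f : ℝ → ℝ} (hm : ContinuousOn f (Ioi 0))
    {c1 r1 : ℝ} (hr1 : -1 < r1) (h1 : ∀ x ∈ Ioc (0:ℝ) 1, |f x| ≤ c1 * x ^ r1)
    {g : ℝ → ℝ} (hg : IntegrableOn g (Ioi 1)) (h2 : ∀ x ∈ Ioi (1:ℝ), |f x| ≤ g x) :
    IntegrableOn f (Ioi 0) := by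
  have hsplit : Ioc (0:ℝ) 1 ∪ Ioi 1 = Ioi 0 := Ioc_union_Ioi_eq_Ioi zero_le_one
  rw [← hsplit]
  apply IntegrableOn.union
  · have hdom : IntegrableOn (fun x : ℝ => c1 * x ^ r1) (Ioc 0 1) := by
      have := (intervalIntegral.intervalIntegrable_rpow' (a := 0) (b := 1) hr1)
      rw [intervalIntegrable_iff_integrableOn_Ioc_of_le zero_le_one] at this
      exact this.const_mul c1
    refine Integrable.mono' hdom ?_ ?_
    · exact (hm.mono (Ioc_subset_Ioi_self)).aestronglyMeasurable measurableSet_Ioc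
    · exact (ae_restrict_iff' measurableSet_Ioc).2 (Eventually.of_forall fun x hx =>
        (by simpa [Real.norm_eq_abs] using h1 x hx))
  · refine Integrable.mono' hg ?_ ?_
    · exact (hm.mono (t := Ioi 1) (fun x hx => lt_trans zero_lt_one hx)).aestronglyMeasurable
        measurableSet_Ioi
    · exact (ae_restrict_iff' measurableSet_Ioi).2 (Eventually.of_forall fun x hx =>
        (by simpa [Real.norm_eq_abs] using h2 x hx))

lemma contOn_rpow (r : ℝ) : ContinuousOn (fun x : ℝ => x ^ r) (Ioi 0) := fun x hx =>
  (Real.continuousAt_rpow_const x r (Or.inl (ne_of_gt hx))).continuousWithinAt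

lemma rpow_mul_self {x : ℝ} (hx : 0 < x) (r : ℝ) : x ^ r * x = x ^ (r + 1) := by
  rw [Real.rpow_add hx, Real.rpow_one]

variable {p : ℝ}

lemma cont_exp_factor (p : ℝ) : Continuous (fun x : ℝ => Real.exp (-(p * x))) :=
  Real.continuous_exp.comp (continuous_const.mul continuous_id).neg

lemma intOn_half (hp : 0 < p) :
    IntegrableOn (fun x : ℝ => x ^ (-(1/2):ℝ) * Real.exp (-(p * x))) (Ioi 0) := by
  apply integrableOn_Ioi_of_bounds (c1 := 1) (r1 := -(1/2))
    (g := fun x : ℝ => Real.exp (-p * x))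
  · exact (contOn_rpow _).mul (cont_exp_factor p).continuousOn
  · norm_num
  · intro x hx
    have hx0 : (0:ℝ) < x := hx.1
    have hb : Real.exp (-(p * x)) ≤ 1 := by
      nlinarith [one_sub_exp_nonneg (show (0:ℝ) ≤ p * x by positivity)]
    rw [abs_of_nonneg (by positivity)]
    calc x ^ (-(1/2):ℝ) * Real.exp (-(p*x)) ≤ x ^ (-(1/2):ℝ) * 1 :=
          mul_le_mul_of_nonneg_left hb (by positivity)
      _ = 1 * x ^ (-(1/2):ℝ) := by ring
  · exact exp_neg_integrableOn_Ioi 1 hp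
  · intro x hx
    have hx1 : (1:ℝ) ≤ x := le_of_lt hx
    have hx0 : (0:ℝ) < x := lt_of_lt_of_le zero_lt_one hx1
    have hr : x ^ (-(1/2):ℝ) ≤ 1 := Real.rpow_le_one_of_one_le_of_nonpos hx1 (by norm_num)
    rw [abs_of_nonneg (by positivity)]
    calc x ^ (-(1/2):ℝ) * Real.exp (-(p*x)) ≤ 1 * Real.exp (-(p*x)) :=
          mul_le_mul_of_nonneg_right hr (Real.exp_pos _).le
      _ = Real.exp (-p * x) := by rw [one_mul, neg_mul]

lemma int_half (hp : 0 < p) :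
    ∫ x in Ioi (0:ℝ), x ^ (-(1/2):ℝ) * Real.exp (-(p * x)) = Real.sqrt π / Real.sqrt p := by
  have h := Real.integral_rpow_mul_exp_neg_mul_Ioi (show (0:ℝ) < 1/2 by norm_num) hp
  rw [Real.Gamma_one_half_eq] at h
  have e1 : ((1:ℝ)/2 - 1) = (-(1/2):ℝ) := by norm_num
  rw [e1] at h
  rw [h, ← Real.sqrt_eq_rpow, one_div, Real.sqrt_inv, inv_mul_eq_div]

lemma intOn_A (hp : 0 < p) :
    IntegrableOn (fun x : ℝ => x ^ (-(3/2):ℝ) * (1 - Real.exp (-(p * x)))) (Ioi 0) := by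
  apply integrableOn_Ioi_of_bounds (c1 := p) (r1 := -(1/2))
    (g := fun x : ℝ => x ^ (-(3/2):ℝ))
  · exact (contOn_rpow _).mul (continuous_const.sub (cont_exp_factor p)).continuousOn
  · norm_num
  · intro x hx
    have hx0 : (0:ℝ) < x := hx.1
    have hpx : (0:ℝ) ≤ p * x := by positivity
    rw [abs_of_nonneg (mul_nonneg (by positivity) (one_sub_exp_nonneg hpx))]
    have key : x ^ (-(3/2):ℝ) * x = x ^ (-(1/2):ℝ) := by
      rw [rpow_mul_self hx0]; norm_num
    calc x ^ (-(3/2):ℝ) * (1 - Real.exp (-(p*x))) ≤ x ^ (-(3/2):ℝ) * (p * x) :=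
          mul_le_mul_of_nonneg_left (one_sub_exp_neg_le hpx) (by positivity)
      _ = p * (x ^ (-(3/2):ℝ) * x) := by ring
      _ = p * x ^ (-(1/2):ℝ) := by rw [key]
  · exact integrableOn_Ioi_rpow_of_lt (by norm_num) zero_lt_one
  · intro x hx
    have hx0 : (0:ℝ) < x := lt_trans zero_lt_one hx
    have hpx : (0:ℝ) ≤ p * x := by positivity
    have hb : 1 - Real.exp (-(p * x)) ≤ 1 := by
      nlinarith [Real.exp_pos (-(p*x))]
    rw [abs_of_nonneg (mul_nonneg (by positivity) (one_sub_exp_nonneg hpx))]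
    calc x ^ (-(3/2):ℝ) * (1 - Real.exp (-(p*x))) ≤ x ^ (-(3/2):ℝ) * 1 :=
          mul_le_mul_of_nonneg_left hb (by positivity)
      _ = x ^ (-(3/2):ℝ) := mul_one _

lemma intOn_B (hp : 0 < p) :
    IntegrableOn (fun x : ℝ => x ^ (-(5/2):ℝ) * (p * x - 1 + Real.exp (-(p * x)))) (Ioi 0) := by
  refine integrableOn_Ioi_of_bounds (c1 := p ^ 2 / 2) (r1 := -(1/2))
    (g := fun x : ℝ => p * x ^ (-(3/2):ℝ))
    ((contOn_rpow _).mul (Continuous.continuousOn (by fun_prop :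
        Continuous fun x : ℝ => p * x - 1 + Real.exp (-(p * x)))))
    (by norm_num) ?_ ?_ ?_
  · intro x hx
    have hx0 : (0:ℝ) < x := hx.1
    have hpx : (0:ℝ) ≤ p * x := by positivity
    rw [abs_of_nonneg (mul_nonneg (by positivity) (sub_one_add_exp_nonneg hpx))]
    have key : x ^ (-(5/2):ℝ) * x * x = x ^ (-(1/2):ℝ) := by
      rw [rpow_mul_self hx0, rpow_mul_self hx0]; norm_num
    calc x ^ (-(5/2):ℝ) * (p * x - 1 + Real.exp (-(p*x)))
        ≤ x ^ (-(5/2):ℝ) * ((p*x) ^ 2 / 2) :=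
          mul_le_mul_of_nonneg_left (sub_one_add_exp_le_sq hpx) (by positivity)
      _ = p ^ 2 / 2 * (x ^ (-(5/2):ℝ) * x * x) := by ring
      _ = p ^ 2 / 2 * x ^ (-(1/2):ℝ) := by rw [key]
  · exact (integrableOn_Ioi_rpow_of_lt (by norm_num) zero_lt_one).const_mul p
  · intro x hx
    have hx0 : (0:ℝ) < x := lt_trans zero_lt_one hx
    have hpx : (0:ℝ) ≤ p * x := by positivity
    rw [abs_of_nonneg (mul_nonneg (by positivity) (sub_one_add_exp_nonneg hpx))]
    have hb : p * x - 1 + Real.exp (-(p * x)) ≤ p * x := by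
      nlinarith [one_sub_exp_nonneg hpx]
    have key : x ^ (-(5/2):ℝ) * x = x ^ (-(3/2):ℝ) := by
      rw [rpow_mul_self hx0]; norm_num
    calc x ^ (-(5/2):ℝ) * (p * x - 1 + Real.exp (-(p*x))) ≤ x ^ (-(5/2):ℝ) * (p * x) :=
          mul_le_mul_of_nonneg_left hb (by positivity)
      _ = p * (x ^ (-(5/2):ℝ) * x) := by ring
      _ = p * x ^ (-(3/2):ℝ) := by rw [key]


lemma deriv_coeff {x : ℝ} (hx : 0 < x) (c r : ℝ) :
    HasDerivAt (fun x : ℝ => c * x ^ r) (c * r * x ^ (r - 1)) x := by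
  have := (Real.hasDerivAt_rpow_const (x := x) (p := r) (Or.inl hx.ne')).const_mul c
  refine this.congr_deriv ?_
  ring

lemma deriv_exp_term (p : ℝ) (x : ℝ) :
    HasDerivAt (fun x : ℝ => Real.exp (-(p * x))) (-p * Real.exp (-(p * x))) x := by
  have h : HasDerivAt (fun x : ℝ => -(p * x)) (-p) x := by
    exact (((hasDerivAt_id x).const_mul p).neg).congr_deriv (by ring)
  simpa [mul_comm] using h.exp

lemma int_A (hp : 0 < p) :
    ∫ x in Ioi (0:ℝ), x ^ (-(3/2):ℝ) * (1 - Real.exp (-(p * x)))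
      = 2 * Real.sqrt π * Real.sqrt p := by
  set φ : ℝ → ℝ := fun x => (-2 * x ^ (-(1/2):ℝ)) * (1 - Real.exp (-(p * x))) with hφ
  set φ' : ℝ → ℝ := fun x => x ^ (-(3/2):ℝ) * (1 - Real.exp (-(p * x)))
      + (-2 * p) * (x ^ (-(1/2):ℝ) * Real.exp (-(p * x))) with hφ'
  have hderiv : ∀ x ∈ Ioi (0:ℝ), HasDerivAt φ (φ' x) x := by
    intro x hx
    have hx0 : (0:ℝ) < x := hx
    have h1 : HasDerivAt (fun x : ℝ => -2 * x ^ (-(1/2):ℝ)) (x ^ (-(3/2):ℝ)) x := by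
      have := deriv_coeff hx0 (-2) (-(1/2))
      convert this using 1
      rw [show (-(1/2):ℝ) - 1 = -(3/2) by norm_num]
      ring
    have h2 : HasDerivAt (fun x : ℝ => 1 - Real.exp (-(p * x))) (p * Real.exp (-(p * x))) x := by
      have := (deriv_exp_term p x).const_sub 1
      refine this.congr_deriv ?_
      ring
    have := h1.mul h2
    refine this.congr_deriv ?_
    simp only [hφ']
    ring
  have hcont : ContinuousWithinAt φ (Ici 0) 0 := by
    have hval : φ 0 = 0 := by
      simp [hφ, Real.zero_rpow (show (-(1/2):ℝ) ≠ 0 by norm_num)]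
    rw [ContinuousWithinAt, hval]
    have hg : Tendsto (fun x : ℝ => 2 * p * x ^ ((1:ℝ)/2)) (nhdsWithin 0 (Ici 0)) (𝓝 0) := by
      have hc : ContinuousAt (fun x : ℝ => x ^ ((1:ℝ)/2)) 0 :=
        Real.continuousAt_rpow_const 0 _ (Or.inr (by norm_num))
      have hc2 : ContinuousAt (fun x : ℝ => 2 * p * x ^ ((1:ℝ)/2)) 0 := hc.const_mul _
      have := Tendsto.mono_left hc2 (nhdsWithin_le_nhds (s := Ici (0:ℝ)))
      simpa [Real.zero_rpow (show ((1:ℝ)/2) ≠ 0 by norm_num)] using this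
    apply squeeze_zero_norm' _ hg
    filter_upwards [self_mem_nhdsWithin] with x (hx : x ∈ Ici 0)
    rcases eq_or_lt_of_le (mem_Ici.1 hx : (0:ℝ) ≤ x) with h | hx0
    · simp [hφ, ← h, Real.zero_rpow (show (-(1/2):ℝ) ≠ 0 by norm_num),
        Real.zero_rpow (show ((1:ℝ)/2) ≠ 0 by norm_num)]
    · have hpx : (0:ℝ) ≤ p * x := by positivity
      have ha : (0:ℝ) ≤ x ^ (-(1/2):ℝ) := by positivity
      have hb : (0:ℝ) ≤ 1 - Real.exp (-(p * x)) := one_sub_exp_nonneg hpx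
      have habs : ‖φ x‖ = 2 * (x ^ (-(1/2):ℝ) * (1 - Real.exp (-(p * x)))) := by
        rw [Real.norm_eq_abs, hφ, abs_mul, abs_mul, abs_of_nonneg ha, abs_of_nonneg hb]
        norm_num [mul_assoc]
      rw [habs]
      have key : x ^ (-(1/2):ℝ) * x = x ^ ((1:ℝ)/2) := by
        rw [rpow_mul_self hx0]; norm_num
      calc 2 * (x ^ (-(1/2):ℝ) * (1 - Real.exp (-(p * x))))
          ≤ 2 * (x ^ (-(1/2):ℝ) * (p * x)) := by
            have := mul_le_mul_of_nonneg_left (one_sub_exp_neg_le hpx) ha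
            linarith
        _ = 2 * p * (x ^ (-(1/2):ℝ) * x) := by ring
        _ = 2 * p * x ^ ((1:ℝ)/2) := by rw [key]
  have htop : Tendsto φ atTop (𝓝 0) := by
    have l1 : Tendsto (fun x : ℝ => -2 * x ^ (-(1/2):ℝ)) atTop (𝓝 (-2 * 0)) :=
      (tendsto_rpow_neg_atTop (by norm_num : (0:ℝ) < 1/2)).const_mul (-2)
    have lexp : Tendsto (fun x : ℝ => Real.exp (-(p * x))) atTop (𝓝 0) := by
      apply Real.tendsto_exp_atBot.comp
      exact tendsto_neg_atTop_atBot.comp (tendsto_id.const_mul_atTop hp)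
    have l2 : Tendsto (fun x : ℝ => 1 - Real.exp (-(p * x))) atTop (𝓝 (1 - 0)) :=
      tendsto_const_nhds.sub lexp
    rw [hφ, show (0:ℝ) = (-2 * 0) * (1 - 0) by norm_num]
    exact l1.mul l2
  have hint : IntegrableOn φ' (Ioi 0) :=
    (intOn_A hp).add ((intOn_half hp).const_mul (-2 * p))
  have key := integral_Ioi_of_hasDerivAt_of_tendsto hcont hderiv hint htop
  have hval : φ 0 = 0 := by
    simp [hφ, Real.zero_rpow (show (-(1/2):ℝ) ≠ 0 by norm_num)]
  rw [hval, sub_zero] at key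
  have hsplit : ∫ x in Ioi (0:ℝ), φ' x
      = (∫ x in Ioi (0:ℝ), x ^ (-(3/2):ℝ) * (1 - Real.exp (-(p * x))))
        + (-2 * p) * ∫ x in Ioi (0:ℝ), x ^ (-(1/2):ℝ) * Real.exp (-(p * x)) := by
    rw [hφ']
    rw [integral_add (intOn_A hp) ((intOn_half hp).const_mul (-2 * p)),
      integral_const_mul]
  rw [hsplit, int_half hp] at key
  have hps : Real.sqrt p ≠ 0 := by positivity
  have hfin : (2:ℝ) * p * (Real.sqrt π / Real.sqrt p) = 2 * Real.sqrt π * Real.sqrt p := by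
    rw [mul_div_assoc']
    rw [div_eq_iff hps]
    nlinarith [Real.sq_sqrt hp.le, Real.sqrt_nonneg p, Real.sqrt_nonneg π]
  linarith [key, hfin]


lemma p_mul_sqrt (hp : 0 < p) : p * Real.sqrt p = p ^ ((3:ℝ)/2) := by
  rw [show ((3:ℝ)/2) = 1 + 1/2 by norm_num, Real.rpow_add hp, Real.rpow_one,
    Real.sqrt_eq_rpow]

lemma int_B (hp : 0 < p) :
    ∫ x in Ioi (0:ℝ), x ^ (-(5/2):ℝ) * (p * x - 1 + Real.exp (-(p * x)))
      = 4/3 * Real.sqrt π * p ^ ((3:ℝ)/2) := by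
  set ψ : ℝ → ℝ := fun x => (-(2/3) * x ^ (-(3/2):ℝ)) * (p * x - 1 + Real.exp (-(p * x)))
    with hψ
  set ψ' : ℝ → ℝ := fun x => x ^ (-(5/2):ℝ) * (p * x - 1 + Real.exp (-(p * x)))
      + (-(2 * p / 3)) * (x ^ (-(3/2):ℝ) * (1 - Real.exp (-(p * x)))) with hψ'
  have hderiv : ∀ x ∈ Ioi (0:ℝ), HasDerivAt ψ (ψ' x) x := by
    intro x hx
    have hx0 : (0:ℝ) < x := hx
    have h1 : HasDerivAt (fun x : ℝ => -(2/3) * x ^ (-(3/2):ℝ)) (x ^ (-(5/2):ℝ)) x := by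
      have := deriv_coeff hx0 (-(2/3)) (-(3/2))
      convert this using 1
      rw [show (-(3/2):ℝ) - 1 = -(5/2) by norm_num]
      ring
    have h2 : HasDerivAt (fun x : ℝ => p * x - 1 + Real.exp (-(p * x)))
        (p - p * Real.exp (-(p * x))) x := by
      have he := deriv_exp_term p x
      have hl : HasDerivAt (fun x : ℝ => p * x - 1) p x := by
        exact (((hasDerivAt_id x).const_mul p).sub_const 1).congr_deriv (by ring)
      have := hl.add he
      refine this.congr_deriv ?_
      ring
    have := h1.mul h2
    refine this.congr_deriv ?_
    simp only [hψ']
    ring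
  have hval : ψ 0 = 0 := by
    simp [hψ, Real.zero_rpow (show (-(3/2):ℝ) ≠ 0 by norm_num)]
  have hcont : ContinuousWithinAt ψ (Ici 0) 0 := by
    rw [ContinuousWithinAt, hval]
    have hg : Tendsto (fun x : ℝ => p ^ 2 / 3 * x ^ ((1:ℝ)/2)) (nhdsWithin 0 (Ici 0)) (𝓝 0) := by
      have hc : ContinuousAt (fun x : ℝ => x ^ ((1:ℝ)/2)) 0 :=
        Real.continuousAt_rpow_const 0 _ (Or.inr (by norm_num))
      have hc2 : ContinuousAt (fun x : ℝ => p ^ 2 / 3 * x ^ ((1:ℝ)/2)) 0 := hc.const_mul _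
      have := Tendsto.mono_left hc2 (nhdsWithin_le_nhds (s := Ici (0:ℝ)))
      simpa [Real.zero_rpow (show ((1:ℝ)/2) ≠ 0 by norm_num)] using this
    apply squeeze_zero_norm' _ hg
    filter_upwards [self_mem_nhdsWithin] with x (hx : x ∈ Ici 0)
    rcases eq_or_lt_of_le (mem_Ici.1 hx : (0:ℝ) ≤ x) with h | hx0
    · simp [hψ, ← h, Real.zero_rpow (show (-(3/2):ℝ) ≠ 0 by norm_num),
        Real.zero_rpow (show ((1:ℝ)/2) ≠ 0 by norm_num)]
    · have hpx : (0:ℝ) ≤ p * x := by positivity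
      have ha : (0:ℝ) ≤ x ^ (-(3/2):ℝ) := by positivity
      have hb : (0:ℝ) ≤ p * x - 1 + Real.exp (-(p * x)) := sub_one_add_exp_nonneg hpx
      have habs : ‖ψ x‖ = 2/3 * (x ^ (-(3/2):ℝ) * (p * x - 1 + Real.exp (-(p * x)))) := by
        rw [Real.norm_eq_abs, hψ, abs_mul, abs_mul, abs_of_nonneg ha, abs_of_nonneg hb]
        norm_num [mul_assoc]
      rw [habs]
      have key : x ^ (-(3/2):ℝ) * x * x = x ^ ((1:ℝ)/2) := by
        rw [rpow_mul_self hx0, rpow_mul_self hx0]; norm_num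
      calc 2/3 * (x ^ (-(3/2):ℝ) * (p * x - 1 + Real.exp (-(p * x))))
          ≤ 2/3 * (x ^ (-(3/2):ℝ) * ((p * x) ^ 2 / 2)) := by
            have := mul_le_mul_of_nonneg_left (sub_one_add_exp_le_sq hpx) ha
            linarith
        _ = p ^ 2 / 3 * (x ^ (-(3/2):ℝ) * x * x) := by ring
        _ = p ^ 2 / 3 * x ^ ((1:ℝ)/2) := by rw [key]
  have htop : Tendsto ψ atTop (𝓝 0) := by
    have l1 : Tendsto (fun x : ℝ => x ^ (-(1/2):ℝ)) atTop (𝓝 0) :=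
      tendsto_rpow_neg_atTop (by norm_num : (0:ℝ) < 1/2)
    have l2 : Tendsto (fun x : ℝ => x ^ (-(3/2):ℝ)) atTop (𝓝 0) :=
      tendsto_rpow_neg_atTop (by norm_num : (0:ℝ) < 3/2)
    have lexp : Tendsto (fun x : ℝ => Real.exp (-(p * x))) atTop (𝓝 0) := by
      apply Real.tendsto_exp_atBot.comp
      exact tendsto_neg_atTop_atBot.comp (tendsto_id.const_mul_atTop hp)
    have lL : Tendsto (fun x : ℝ => -(2 * p / 3) * x ^ (-(1/2):ℝ) + (2/3) * x ^ (-(3/2):ℝ)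
        - (2/3) * (x ^ (-(3/2):ℝ) * Real.exp (-(p * x)))) atTop (𝓝 0) := by
      have := ((l1.const_mul (-(2 * p / 3))).add (l2.const_mul (2/3))).sub
        ((l2.mul lexp).const_mul (2/3))
      simpa using this
    apply lL.congr'
    filter_upwards [eventually_gt_atTop (0:ℝ)] with x hx0
    have key : x ^ (-(3/2):ℝ) * x = x ^ (-(1/2):ℝ) := by
      rw [rpow_mul_self hx0]; norm_num
    simp only [hψ]
    linear_combination (2 * p / 3) * key
  have hint : IntegrableOn ψ' (Ioi 0) :=
    (intOn_B hp).add ((intOn_A hp).const_mul (-(2 * p / 3)))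
  have key := integral_Ioi_of_hasDerivAt_of_tendsto hcont hderiv hint htop
  rw [hval, sub_zero] at key
  have hsplit : ∫ x in Ioi (0:ℝ), ψ' x
      = (∫ x in Ioi (0:ℝ), x ^ (-(5/2):ℝ) * (p * x - 1 + Real.exp (-(p * x))))
        + (-(2 * p / 3)) * ∫ x in Ioi (0:ℝ), x ^ (-(3/2):ℝ) * (1 - Real.exp (-(p * x))) := by
    rw [hψ']
    rw [integral_add (intOn_B hp) ((intOn_A hp).const_mul (-(2 * p / 3))),
      integral_const_mul]
  rw [hsplit, int_A hp] at key
  have hfin : (2 * p / 3) * (2 * Real.sqrt π * Real.sqrt p)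
      = 4/3 * Real.sqrt π * p ^ ((3:ℝ)/2) := by
    rw [← p_mul_sqrt hp]
    ring
  linarith [key, hfin]


section TwoD

variable (μ₁ μ₂ : ℝ)

/-- the open region `0 < s < t` -/
def S : Set (ℝ × ℝ) := {q : ℝ × ℝ | 0 < q.1 ∧ q.1 < q.2}

lemma measurableSet_S : MeasurableSet S :=
  (measurableSet_lt measurable_const measurable_fst).inter
    (measurableSet_lt measurable_fst measurable_snd)

noncomputable def G (s t : ℝ) : ℝ := t ^ (-(5/2):ℝ) * (1 - Real.exp (-μ₁ * s - μ₂ * (t - s)))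

noncomputable def Q : ℝ × ℝ → ℝ := S.indicator (fun q => G μ₁ μ₂ q.1 q.2)

noncomputable def R (t : ℝ) : ℝ :=
  t ^ (-(5/2):ℝ) * (t - (Real.exp (-(μ₂ * t)) - Real.exp (-(μ₁ * t))) / (μ₁ - μ₂))

variable {μ₁ μ₂ : ℝ}

lemma G_nonneg (h₁ : 0 < μ₁) (h₂ : 0 < μ₂) {s t : ℝ} (hs : 0 ≤ s) (hst : s ≤ t) :
    0 ≤ G μ₁ μ₂ s t := by
  have ht : 0 ≤ t := le_trans hs hst
  have harg : -μ₁ * s - μ₂ * (t - s) ≤ 0 := by nlinarith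
  have : Real.exp (-μ₁ * s - μ₂ * (t - s)) ≤ Real.exp 0 := Real.exp_le_exp.2 harg
  have h1 : 0 ≤ 1 - Real.exp (-μ₁ * s - μ₂ * (t - s)) := by simpa using this
  have h0 : (0:ℝ) ≤ t ^ (-(5/2):ℝ) := Real.rpow_nonneg ht _
  exact mul_nonneg h0 h1

lemma Q_nonneg (h₁ : 0 < μ₁) (h₂ : 0 < μ₂) (q : ℝ × ℝ) : 0 ≤ Q μ₁ μ₂ q := by
  unfold Q
  apply Set.indicator_nonneg
  rintro ⟨s, t⟩ ⟨hs, hst⟩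
  exact G_nonneg h₁ h₂ hs.le hst.le

lemma Q_meas : AEStronglyMeasurable (Q μ₁ μ₂) (volume.prod volume) := by
  unfold Q
  rw [aestronglyMeasurable_indicator_iff measurableSet_S]
  apply ContinuousOn.aestronglyMeasurable _ measurableSet_S
  intro q hq
  have ht : q.2 ≠ 0 := by
    have : (0:ℝ) < q.2 := lt_trans hq.1 hq.2
    exact this.ne'
  have hc1 : ContinuousAt (fun q : ℝ × ℝ => q.2 ^ (-(5/2):ℝ)) q :=
    (Real.continuousAt_rpow_const q.2 _ (Or.inl ht)).comp continuous_snd.continuousAt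
  have hc2 : Continuous (fun q : ℝ × ℝ =>
      1 - Real.exp (-μ₁ * q.1 - μ₂ * (q.2 - q.1))) := by fun_prop
  exact ((hc1.mul hc2.continuousAt) : ContinuousAt _ q).continuousWithinAt

lemma Q_section (t : ℝ) :
    (fun s => Q μ₁ μ₂ (s, t)) = (Ioo (0:ℝ) t).indicator (fun s => G μ₁ μ₂ s t) := by
  funext s
  simp only [Q, S, Set.indicator_apply, Set.mem_setOf_eq, Set.mem_Ioo]

lemma G_section_integrableOn (t : ℝ) : IntegrableOn (fun s => G μ₁ μ₂ s t) (Ioo 0 t) := by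
  rcases le_or_gt t 0 with h | h
  · rw [Set.Ioo_eq_empty (not_lt.2 h)]
    exact integrableOn_empty
  · have hc : Continuous (fun s => G μ₁ μ₂ s t) := by
      unfold G; fun_prop
    have := hc.intervalIntegrable (μ := volume) 0 t
    rw [intervalIntegrable_iff_integrableOn_Ioo_of_le h.le] at this
    exact this

lemma Q_section_integrable (t : ℝ) : Integrable (fun s => Q μ₁ μ₂ (s, t)) := by
  rw [Q_section]
  exact (G_section_integrableOn t).integrable_indicator measurableSet_Ioo

lemma Q_inner_integral (hne : μ₁ ≠ μ₂) (t : ℝ) :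
    ∫ s, Q μ₁ μ₂ (s, t) = (Ioi (0:ℝ)).indicator (R μ₁ μ₂) t := by
  rw [Q_section, integral_indicator measurableSet_Ioo]
  rcases le_or_gt t 0 with h | h
  · rw [Set.Ioo_eq_empty (fun hlt => absurd h (not_le.2 hlt)), Set.indicator_of_notMem
      (by simpa using h)]
    simp
  · rw [Set.indicator_of_mem (by exact h)]
    have hμ : μ₂ - μ₁ ≠ 0 := sub_ne_zero.2 (Ne.symm hne)
    have hμ' : μ₁ - μ₂ ≠ 0 := sub_ne_zero.2 hne
    have key : ∫ s in (0:ℝ)..t, (1 - Real.exp (-μ₁ * s - μ₂ * (t - s)))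
        = t - (Real.exp (-(μ₂ * t)) - Real.exp (-(μ₁ * t))) / (μ₁ - μ₂) := by
      have hd : ∀ s ∈ Set.uIcc (0:ℝ) t, HasDerivAt
          (fun s : ℝ => s - Real.exp (-μ₁ * s - μ₂ * (t - s)) / (μ₂ - μ₁))
          (1 - Real.exp (-μ₁ * s - μ₂ * (t - s))) s := by
        intro s _
        have harg : HasDerivAt (fun s : ℝ => -μ₁ * s - μ₂ * (t - s)) (μ₂ - μ₁) s := by
          have hA : HasDerivAt (fun s : ℝ => -μ₁ * s) (-μ₁) s := by
            simpa using (hasDerivAt_id s).const_mul (-μ₁)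
          have hB : HasDerivAt (fun s : ℝ => μ₂ * (t - s)) (-μ₂) s := by
            have hts : HasDerivAt (fun s : ℝ => t - s) (-1) s := by
              simpa using (hasDerivAt_id s).const_sub t
            simpa using hts.const_mul μ₂
          refine (hA.sub hB).congr_deriv ?_
          ring
        have hE := (harg.exp).div_const (μ₂ - μ₁)
        have := (hasDerivAt_id s).sub hE
        refine this.congr_deriv ?_
        field_simp
      have hint : IntervalIntegrable
          (fun s : ℝ => 1 - Real.exp (-μ₁ * s - μ₂ * (t - s))) volume 0 t := by
        apply Continuous.intervalIntegrable
        fun_prop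
      rw [intervalIntegral.integral_eq_sub_of_hasDerivAt hd hint]
      have e1 : -μ₁ * t - μ₂ * (t - t) = -(μ₁ * t) := by ring
      have e2 : -μ₁ * 0 - μ₂ * (t - 0) = -(μ₂ * t) := by ring
      rw [e1, e2]
      field_simp
      ring
    calc ∫ s in Ioo (0:ℝ) t, G μ₁ μ₂ s t
        = ∫ s in Ioo (0:ℝ) t,
            t ^ (-(5/2):ℝ) * (1 - Real.exp (-μ₁ * s - μ₂ * (t - s))) := rfl
      _ = t ^ (-(5/2):ℝ) * ∫ s in Ioo (0:ℝ) t, (1 - Real.exp (-μ₁ * s - μ₂ * (t - s))) := by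
          rw [integral_const_mul]
      _ = R μ₁ μ₂ t := by
          rw [← integral_Ioc_eq_integral_Ioo,
            ← intervalIntegral.integral_of_le h.le, key, R]

lemma R_eq (hne : μ₁ ≠ μ₂) {t : ℝ} (ht : t ∈ Ioi (0:ℝ)) :
    R μ₁ μ₂ t = (μ₁ - μ₂)⁻¹ *
      (t ^ (-(5/2):ℝ) * (μ₁ * t - 1 + Real.exp (-(μ₁ * t)))
        - t ^ (-(5/2):ℝ) * (μ₂ * t - 1 + Real.exp (-(μ₂ * t)))) := by
  have hμ' : μ₁ - μ₂ ≠ 0 := sub_ne_zero.2 hne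
  unfold R
  field_simp
  ring

lemma intOn_R (h₁ : 0 < μ₁) (h₂ : 0 < μ₂) (hne : μ₁ ≠ μ₂) :
    IntegrableOn (R μ₁ μ₂) (Ioi 0) := by
  have h : IntegrableOn (fun t : ℝ => (μ₁ - μ₂)⁻¹ *
      (t ^ (-(5/2):ℝ) * (μ₁ * t - 1 + Real.exp (-(μ₁ * t)))
        - t ^ (-(5/2):ℝ) * (μ₂ * t - 1 + Real.exp (-(μ₂ * t))))) (Ioi 0) :=
    ((intOn_B h₁).sub (intOn_B h₂)).const_mul (μ₁ - μ₂)⁻¹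
  exact IntegrableOn.congr_fun h (fun t ht => (R_eq hne ht).symm) measurableSet_Ioi

lemma int_R (h₁ : 0 < μ₁) (h₂ : 0 < μ₂) (hne : μ₁ ≠ μ₂) :
    ∫ t in Ioi (0:ℝ), R μ₁ μ₂ t
      = (μ₁ - μ₂)⁻¹ * (4/3 * Real.sqrt π * (μ₁ ^ ((3:ℝ)/2) - μ₂ ^ ((3:ℝ)/2))) := by
  rw [setIntegral_congr_fun measurableSet_Ioi (fun t ht => R_eq hne ht)]
  rw [integral_const_mul, integral_sub (intOn_B h₁) (intOn_B h₂), int_B h₁, int_B h₂]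
  ring

lemma Q_integrable (h₁ : 0 < μ₁) (h₂ : 0 < μ₂) (hne : μ₁ ≠ μ₂) :
    Integrable (Q μ₁ μ₂) (volume.prod volume) := by
  refine (integrable_prod_iff' Q_meas).2 ⟨?_, ?_⟩
  · exact Eventually.of_forall fun t => Q_section_integrable t
  · have heq : (fun t => ∫ s, ‖Q μ₁ μ₂ (s, t)‖)
        = (Ioi (0:ℝ)).indicator (R μ₁ μ₂) := by
      funext t
      rw [← Q_inner_integral hne t]
      congr 1
      funext s
      exact Real.norm_of_nonneg (Q_nonneg h₁ h₂ _)
    rw [heq]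
    exact (intOn_R h₁ h₂ hne).integrable_indicator measurableSet_Ioi

end TwoD

end Stmt5Aux

open Stmt5Aux

theorem stmt_5 (μ₁ μ₂ : ℝ) (h₁ : 0 < μ₁) (h₂ : 0 < μ₂) (hne : μ₁ ≠ μ₂) :
    ∫ s₁ in Set.Ioi (0 : ℝ), ∫ s₂ in Set.Ioi (0 : ℝ),
        (1 / (2 * Real.sqrt (2 * Real.pi))) * (s₁ + s₂) ^ (-(5 / 2) : ℝ) *
          (1 - Real.exp (-μ₁ * s₁ - μ₂ * s₂)) =
      Real.sqrt 2 / 3 * (μ₁ ^ (3 / 2 : ℝ) - μ₂ ^ (3 / 2 : ℝ)) / (μ₁ - μ₂) := by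
  simp_rw [mul_assoc, integral_const_mul]
  have step1 : ∀ s : ℝ,
      (∫ t in Ioi (0:ℝ), (s + t) ^ (-(5/2):ℝ) * (1 - Real.exp (-μ₁ * s - μ₂ * t)))
      = ∫ t in Ioi s, G μ₁ μ₂ s t := by
    intro s
    have hmp := (measurePreserving_add_right volume s).setIntegral_preimage_emb
      (measurableEmbedding_addRight s) (fun t => G μ₁ μ₂ s t) (Ioi s)
    have hpre : (fun x : ℝ => x + s) ⁻¹' (Ioi s) = Ioi 0 := by
      ext x; simp
    rw [hpre] at hmp
    rw [← hmp]
    apply setIntegral_congr_fun measurableSet_Ioi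
    intro t ht
    simp only [G, add_sub_cancel_right]
    rw [add_comm s t]
  have step2 : ∀ s ∈ Ioi (0:ℝ), (∫ t in Ioi s, G μ₁ μ₂ s t) = ∫ t, Q μ₁ μ₂ (s, t) := by
    intro s hs
    rw [← integral_indicator measurableSet_Ioi]
    congr 1
    funext t
    simp only [Q, S, Set.indicator_apply, Set.mem_Ioi, Set.mem_setOf_eq]
    by_cases h : s < t
    · simp [h, show (0:ℝ) < s from hs]
    · simp [h]
  have outer1 : (∫ s in Ioi (0:ℝ), ∫ t in Ioi (0:ℝ),
        (s + t) ^ (-(5/2):ℝ) * (1 - Real.exp (-μ₁ * s - μ₂ * t)))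
      = ∫ s, ∫ t, Q μ₁ μ₂ (s, t) := by
    have e1 : (∫ s in Ioi (0:ℝ), ∫ t in Ioi (0:ℝ),
          (s + t) ^ (-(5/2):ℝ) * (1 - Real.exp (-μ₁ * s - μ₂ * t)))
        = ∫ s in Ioi (0:ℝ), ∫ t, Q μ₁ μ₂ (s, t) :=
      setIntegral_congr_fun measurableSet_Ioi (fun s hs => by rw [step1 s, step2 s hs])
    rw [e1]
    apply setIntegral_eq_integral_of_forall_compl_eq_zero
    intro s hs
    have hz : ∀ t, Q μ₁ μ₂ (s, t) = 0 := by
      intro t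
      simp only [Q, S, Set.indicator_apply, Set.mem_setOf_eq]
      rw [if_neg]
      rintro ⟨h0, -⟩
      exact hs (mem_Ioi.2 h0)
    simp [hz]
  have swap : (∫ s, ∫ t, Q μ₁ μ₂ (s, t)) = ∫ t, ∫ s, Q μ₁ μ₂ (s, t) := by
    have hint : Integrable (Function.uncurry fun s t => Q μ₁ μ₂ (s, t))
        (volume.prod volume) := Q_integrable h₁ h₂ hne
    exact integral_integral_swap hint
  have outer2 : (∫ t, ∫ s, Q μ₁ μ₂ (s, t)) = ∫ t in Ioi (0:ℝ), R μ₁ μ₂ t := by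
    have e2 : (fun t => ∫ s, Q μ₁ μ₂ (s, t)) = (Ioi (0:ℝ)).indicator (R μ₁ μ₂) := by
      funext t; exact Q_inner_integral hne t
    rw [e2, integral_indicator measurableSet_Ioi]
  rw [outer1, swap, outer2, int_R h₁ h₂ hne]
  have hπ : (0:ℝ) < Real.sqrt π := Real.sqrt_pos.2 Real.pi_pos
  have h2 : (0:ℝ) < Real.sqrt 2 := Real.sqrt_pos.2 (by norm_num)
  have hsplit : Real.sqrt (2 * π) = Real.sqrt 2 * Real.sqrt π :=
    Real.sqrt_mul (by norm_num) π
  have h22 : Real.sqrt 2 * Real.sqrt 2 = 2 := Real.mul_self_sqrt (by norm_num)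
  have hd : μ₁ - μ₂ ≠ 0 := sub_ne_zero.2 hne
  rw [hsplit]
  field_simp
  ring_nf
  rw [Real.sq_sqrt (by norm_num : (0:ℝ) ≤ 2)]
  ring
end

section
/- Let T be a positive random variable with Laplace transform E[e^{−λT}] = exp(−λ^{2/3}) for all λ ≥ 0 (a positive stable variable of index 2/3). Then for every integer n ≥ 1, E[T^{−n/2}] = Γ(3n/4 + 1)/Γ(n/2 + 1). -/
open MeasureTheory

open Real Set in
theorem stmt_7 {Ω : Type*} [MeasureSpace Ω] (hP : IsProbabilityMeasure (volume : Measure Ω))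
    (T : Ω → ℝ) (hTmeas : Measurable T) (hTpos : ∀ᵐ ω ∂(volume : Measure Ω), 0 < T ω)
    (hlap : ∀ lam : ℝ, 0 ≤ lam →
      (∫ ω, Real.exp (-lam * T ω)) = Real.exp (-(lam ^ (2 / 3 : ℝ))))
    (n : ℕ) (hn : 1 ≤ n) :
    (∫ ω, (T ω) ^ (-(n : ℝ) / 2)) =
      Real.Gamma (3 * n / 4 + 1) / Real.Gamma (n / 2 + 1) := by
  haveI := hP
  have hn' : (0:ℝ) < n := by exact_mod_cast hn
  set a : ℝ := n / 2 with ha_def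
  have hA : 0 < a := by positivity
  set P : Measure Ω := volume with hP_def
  -- measurability of the kernel
  have hker : Measurable fun p : Ω × ℝ =>
      ENNReal.ofReal (p.2 ^ (a - 1) * Real.exp (-(p.2 * T p.1))) := by
    apply Measurable.ennreal_ofReal
    have h1 : Measurable fun p : Ω × ℝ => p.2 ^ (a - 1) := by measurability
    exact h1.mul
      (Real.measurable_exp.comp ((measurable_snd.mul (hTmeas.comp measurable_fst)).neg))
  -- inner integral over ω
  have inner_om : ∀ s : ℝ, 0 < s →
      (∫⁻ ω, ENNReal.ofReal (s ^ (a - 1) * Real.exp (-(s * T ω))) ∂P)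
        = ENNReal.ofReal (s ^ (a - 1) * Real.exp (-(s ^ (2/3 : ℝ)))) := by
    intro s hs
    have hmeas : Measurable fun ω => Real.exp (-(s * T ω)) :=
      Real.measurable_exp.comp ((measurable_const.mul hTmeas).neg)
    have hint : Integrable (fun ω => Real.exp (-(s * T ω))) P := by
      refine Integrable.mono' (integrable_const 1) hmeas.aestronglyMeasurable ?_
      filter_upwards [hTpos] with ω hω
      rw [Real.norm_eq_abs, abs_of_pos (Real.exp_pos _), Real.exp_le_one_iff]
      nlinarith
    have hval : (∫ ω, Real.exp (-(s * T ω)) ∂P) = Real.exp (-(s ^ (2/3 : ℝ))) := by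
      have := hlap s hs.le
      simpa [neg_mul] using this
    calc ∫⁻ ω, ENNReal.ofReal (s ^ (a - 1) * Real.exp (-(s * T ω))) ∂P
        = ∫⁻ ω, ENNReal.ofReal (s ^ (a - 1)) * ENNReal.ofReal (Real.exp (-(s * T ω))) ∂P := by
          simp_rw [← ENNReal.ofReal_mul (by positivity : (0:ℝ) ≤ s ^ (a - 1))]
      _ = ENNReal.ofReal (s ^ (a - 1)) * ∫⁻ ω, ENNReal.ofReal (Real.exp (-(s * T ω))) ∂P :=
          lintegral_const_mul' _ _ ENNReal.ofReal_ne_top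
      _ = ENNReal.ofReal (s ^ (a - 1)) * ENNReal.ofReal (Real.exp (-(s ^ (2/3 : ℝ)))) := by
          rw [← ofReal_integral_eq_lintegral_ofReal hint
            (Filter.Eventually.of_forall fun ω => (Real.exp_pos _).le), hval]
      _ = _ := by
          rw [← ENNReal.ofReal_mul (by positivity : (0:ℝ) ≤ s ^ (a - 1))]
  -- inner integral over s, for fixed t > 0
  have inner_s : ∀ t : ℝ, 0 < t →
      (∫⁻ s in Ioi (0:ℝ), ENNReal.ofReal (s ^ (a - 1) * Real.exp (-(s * t))))
        = ENNReal.ofReal (Real.Gamma a) * ENNReal.ofReal (t ^ (-a)) := by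
    intro t ht
    have hint : IntegrableOn (fun s : ℝ => s ^ (a - 1) * Real.exp (-(s * t))) (Ioi 0) := by
      have h := integrableOn_rpow_mul_exp_neg_mul_rpow (p := 1) (s := a - 1) (b := t)
        (by linarith) zero_lt_one ht
      refine h.congr_fun (fun x hx => ?_) measurableSet_Ioi
      beta_reduce; rw [Real.rpow_one]; ring_nf
    have hnn : 0 ≤ᵐ[volume.restrict (Ioi (0:ℝ))]
        fun s : ℝ => s ^ (a - 1) * Real.exp (-(s * t)) := by
      refine (ae_restrict_iff' measurableSet_Ioi).mpr (Filter.Eventually.of_forall fun s hs => ?_)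
      have : (0:ℝ) < s := hs
      positivity
    rw [← ofReal_integral_eq_lintegral_ofReal hint hnn]
    have hcomm : (∫ s in Ioi (0:ℝ), s ^ (a - 1) * Real.exp (-(s * t)))
        = ∫ s in Ioi (0:ℝ), s ^ (a - 1) * Real.exp (-(t * s)) := by
      refine setIntegral_congr_fun measurableSet_Ioi fun s _ => ?_
      rw [mul_comm s t]
    rw [hcomm, integral_rpow_mul_exp_neg_mul_Ioi hA ht]
    have h1t : (1/t) ^ a = t ^ (-a) := by
      rw [one_div, Real.inv_rpow ht.le, ← Real.rpow_neg ht.le]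
    rw [h1t, ENNReal.ofReal_mul (by positivity), mul_comm]
  -- integrability of s ^ (a-1) * exp(-s^(2/3)) on Ioi 0 via substitution s = x^(3/2)
  have hK : IntegrableOn (fun s : ℝ => s ^ (a - 1) * Real.exp (-(s ^ (2/3 : ℝ)))) (Ioi 0) := by
    rw [← integrableOn_Ioi_comp_rpow_iff' _ (show (3:ℝ)/2 ≠ 0 by norm_num)]
    refine (Real.GammaIntegral_convergent (by positivity : (0:ℝ) < 3*a/2)).congr_fun
      (fun x hx => ?_) measurableSet_Ioi
    have hx0 : (0:ℝ) < x := hx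
    have h2 : (x ^ ((3:ℝ)/2)) ^ (a - 1) = x ^ ((3:ℝ)/2 * (a - 1)) :=
      (Real.rpow_mul hx0.le _ _).symm
    have h1 : (x ^ ((3:ℝ)/2)) ^ ((2:ℝ)/3) = x := by
      rw [← Real.rpow_mul hx0.le]; norm_num
    have h3 : x ^ ((3:ℝ)/2 * (a - 1)) * x ^ ((3:ℝ)/2 - 1) = x ^ (3*a/2 - 1) := by
      rw [← Real.rpow_add hx0]; ring_nf
    rw [smul_eq_mul, h1, h2, show x ^ ((3:ℝ)/2 - 1) * (x ^ ((3:ℝ)/2 * (a - 1)) * Real.exp (-x))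
      = (x ^ ((3:ℝ)/2 * (a - 1)) * x ^ ((3:ℝ)/2 - 1)) * Real.exp (-x) from by ring, h3,
      mul_comm]
    beta_reduce; ring
  -- value of ∫ s in Ioi 0, s^(a-1) * exp(-s^(2/3))
  have hKval : (∫ s in Ioi (0:ℝ), s ^ (a - 1) * Real.exp (-(s ^ (2/3 : ℝ))))
      = (3/2) * Real.Gamma (3*a/2) := by
    rw [integral_rpow_mul_exp_neg_rpow (by norm_num : (0:ℝ) < 2/3) (by linarith : (-1:ℝ) < a - 1)]
    rw [show a - 1 + 1 = a by ring]
    rw [show a / (2/3 : ℝ) = 3*a/2 by ring]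
    norm_num
  -- set up the double integral
  set L : ENNReal := ∫⁻ ω, ENNReal.ofReal (T ω ^ (-a)) ∂P with hL_def
  have swap := lintegral_lintegral_swap (μ := P) (ν := volume.restrict (Ioi (0:ℝ)))
    (f := fun ω s => ENNReal.ofReal (s ^ (a - 1) * Real.exp (-(s * T ω)))) hker.aemeasurable
  have lhs_eq : (∫⁻ ω, ∫⁻ s in Ioi (0:ℝ),
      ENNReal.ofReal (s ^ (a - 1) * Real.exp (-(s * T ω))) ∂volume ∂P)
        = ENNReal.ofReal (Real.Gamma a) * L := by
    rw [← lintegral_const_mul' _ _ ENNReal.ofReal_ne_top]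
    refine lintegral_congr_ae ?_
    filter_upwards [hTpos] with ω hω
    exact inner_s (T ω) hω
  have rhs_eq : (∫⁻ s in Ioi (0:ℝ),
      ∫⁻ ω, ENNReal.ofReal (s ^ (a - 1) * Real.exp (-(s * T ω))) ∂P ∂volume)
        = ENNReal.ofReal ((3/2) * Real.Gamma (3*a/2)) := by
    rw [setLIntegral_congr_fun measurableSet_Ioi
      (fun s hs => inner_om s hs)]
    have hnn : 0 ≤ᵐ[volume.restrict (Ioi (0:ℝ))]
        fun s : ℝ => s ^ (a - 1) * Real.exp (-(s ^ (2/3 : ℝ))) := by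
      refine (ae_restrict_iff' measurableSet_Ioi).mpr (Filter.Eventually.of_forall fun s hs => ?_)
      have : (0:ℝ) < s := hs
      positivity
    rw [← ofReal_integral_eq_lintegral_ofReal hK hnn, hKval]
  have key : ENNReal.ofReal (Real.Gamma a) * L = ENNReal.ofReal ((3/2) * Real.Gamma (3*a/2)) := by
    rw [← lhs_eq, swap, rhs_eq]
  have hΓa : 0 < Real.Gamma a := Real.Gamma_pos_of_pos hA
  have hΓ2 : 0 < Real.Gamma (3*a/2) := Real.Gamma_pos_of_pos (by positivity)
  have hoR0 : ENNReal.ofReal (Real.Gamma a) ≠ 0 := by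
    simp [ENNReal.ofReal_pos.mpr hΓa, (ENNReal.ofReal_pos.mpr hΓa).ne']
  have hLval : L = (ENNReal.ofReal (Real.Gamma a))⁻¹
      * ENNReal.ofReal ((3/2) * Real.Gamma (3*a/2)) := by
    rw [← key, ← mul_assoc, ENNReal.inv_mul_cancel hoR0 ENNReal.ofReal_ne_top, one_mul]
  -- convert the Bochner integral to L
  have hFnn : 0 ≤ᵐ[P] fun ω => T ω ^ (-(n:ℝ)/2) := by
    filter_upwards [hTpos] with ω hω; positivity
  have hFmeas : AEStronglyMeasurable (fun ω => T ω ^ (-(n:ℝ)/2)) P := by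
    have : Measurable fun ω => T ω ^ (-(n:ℝ)/2) := by measurability
    exact this.aestronglyMeasurable
  have hexp : -(n:ℝ)/2 = -a := by rw [ha_def]; ring
  rw [MeasureTheory.integral_eq_lintegral_of_nonneg_ae hFnn hFmeas]
  have hLL : (∫⁻ ω, ENNReal.ofReal (T ω ^ (-(n:ℝ)/2)) ∂P) = L := by
    rw [hL_def]; congr 1; funext ω; rw [hexp]
  rw [hLL, hLval, ENNReal.toReal_mul, ENNReal.toReal_inv, ENNReal.toReal_ofReal hΓa.le,
    ENNReal.toReal_ofReal (by positivity)]
  -- final Gamma arithmetic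
  have h34 : (3 * (n:ℝ) / 4) ≠ 0 := by positivity
  have h12 : ((n:ℝ) / 2) ≠ 0 := by positivity
  rw [show (3 * (n:ℝ) / 4 + 1) = (3 * (n:ℝ) / 4) + 1 by ring,
    Real.Gamma_add_one h34, Real.Gamma_add_one h12]
  have h3a : 3*a/2 = 3 * (n:ℝ) / 4 := by rw [ha_def]; ring
  rw [h3a, ha_def]
  have hΓn2 : 0 < Real.Gamma ((n:ℝ)/2) := Real.Gamma_pos_of_pos (by positivity)
  field_simp
  ring
end

section
/- For a stable(2/3) variable T with E[e^{−λT}] = exp(−λ^{2/3}) and an independent random variable D with density 2x·1_{[0,1]}(x), and every integer n ≥ 1: E[(D·T^{−1/2})^n] = (2/(n+2))·Γ(3n/4 + 1)/Γ(n/2 + 1). -/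
open MeasureTheory ProbabilityTheory Set Real
open scoped NNReal ENNReal


lemma gammaVal (s t : ℝ) (hs : 0 < s) (ht : 0 < t) :
    ∫ x in Ioi (0:ℝ), x ^ (s-1) * Real.exp (-t * x) = t ^ (-s) * Real.Gamma s := by
  have h := integral_rpow_mul_exp_neg_mul_rpow (p := 1) (q := s-1) (b := t)
    one_pos (by linarith) ht
  simpa [Real.rpow_one, sub_add_cancel] using h

lemma gammaInt (s t : ℝ) (hs : 0 < s) (ht : 0 < t) :
    IntegrableOn (fun x : ℝ => x ^ (s-1) * Real.exp (-t * x)) (Ioi 0) := by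
  have h := integrableOn_rpow_mul_exp_neg_mul_rpow (p := 1) (s := s-1) (b := t)
    (by linarith) one_pos ht
  refine h.congr_fun (fun x hx => ?_) measurableSet_Ioi
  simp only [Real.rpow_one]

lemma stableVal (s : ℝ) (hs : 0 < s) :
    ∫ x in Ioi (0:ℝ), x ^ (s-1) * Real.exp (-(x ^ (2/3 : ℝ))) = 3/2 * Real.Gamma (3*s/2) := by
  have h := integral_rpow_mul_exp_neg_rpow (p := (2/3:ℝ)) (q := s-1) (by norm_num) (by linarith)
  rw [h, show (s-1+1)/(2/3:ℝ) = 3*s/2 by ring]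
  norm_num


lemma stableInt (s : ℝ) (hs : 0 < s) :
    IntegrableOn (fun x : ℝ => x ^ (s-1) * Real.exp (-(x ^ (2/3 : ℝ)))) (Ioi 0) := by
  rw [← integrableOn_Ioi_comp_rpow_iff' _ (p := (3/2:ℝ)) (by norm_num)]
  have h : IntegrableOn (fun x : ℝ => Real.exp (-x) * x ^ (3*s/2 - 1)) (Ioi 0) :=
    Real.GammaIntegral_convergent (by linarith)
  refine h.congr_fun (fun x hx => ?_) measurableSet_Ioi
  have hx0 : (0:ℝ) < x := hx
  rw [smul_eq_mul, ← Real.rpow_mul hx0.le, ← Real.rpow_mul hx0.le,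
    show (3/2:ℝ)*(2/3) = 1 by norm_num, Real.rpow_one, ← mul_assoc, ← Real.rpow_add hx0,
    show (3/2-1:ℝ) + 3/2*(s-1) = 3*s/2-1 by ring, mul_comm]
  exact mul_comm _ _


lemma Dmom {Ω : Type*} [MeasureSpace Ω] (D : Ω → ℝ) (hDmeas : Measurable D)
    (hD : Measure.map D volume =
      volume.withDensity (fun x => ENNReal.ofReal (Set.indicator (Set.Icc 0 1) (fun y => 2 * y) x)))
    (n : ℕ) : (∫ ω, D ω ^ n) = 2 / (n + 2) := by
  have h1 : (∫ ω, D ω ^ n) = ∫ x, x ^ n ∂(Measure.map D volume) :=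
    (integral_map hDmeas.aemeasurable (measurable_id.pow_const n).aestronglyMeasurable).symm
  have hindm : Measurable fun x : ℝ => Set.indicator (Set.Icc 0 1) (fun y => 2 * y) x :=
    (measurable_const.mul measurable_id).indicator measurableSet_Icc
  rw [h1, hD,
    show (fun x : ℝ => ENNReal.ofReal (Set.indicator (Set.Icc 0 1) (fun y => 2 * y) x))
      = fun x => ((Real.toNNReal (Set.indicator (Set.Icc 0 1) (fun y => 2 * y) x) : ℝ≥0) : ℝ≥0∞)
      from rfl,
    integral_withDensity_eq_integral_smul
      (f := fun x => Real.toNNReal (Set.indicator (Set.Icc 0 1) (fun y => 2 * y) x))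
      (measurable_real_toNNReal.comp hindm)]
  have h2 : (fun x : ℝ => (Real.toNNReal (Set.indicator (Set.Icc 0 1) (fun y => 2 * y) x)) • x ^ n)
      = Set.indicator (Set.Icc 0 1) (fun x => 2 * x ^ (n+1)) := by
    funext x
    rcases Classical.em (x ∈ Set.Icc (0:ℝ) 1) with h | h
    · simp only [Set.indicator_of_mem h]
      rw [NNReal.smul_def, smul_eq_mul,
        Real.coe_toNNReal _ (by nlinarith [h.1, h.2] : (0:ℝ) ≤ 2 * x)]
      ring
    · simp [Set.indicator_of_notMem h]
  rw [h2, integral_indicator measurableSet_Icc, MeasureTheory.integral_Icc_eq_integral_Ioc,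
    ← intervalIntegral.integral_of_le zero_le_one, intervalIntegral.integral_const_mul,
    integral_pow]
  push_cast
  norm_num
  ring

lemma Tmom {Ω : Type*} [MeasureSpace Ω] (hP : IsProbabilityMeasure (volume : Measure Ω))
    (T : Ω → ℝ) (hTmeas : Measurable T)
    (hTpos : ∀ᵐ ω ∂(volume : Measure Ω), 0 < T ω)
    (hlap : ∀ lam : ℝ, 0 ≤ lam →
      (∫ ω, Real.exp (-lam * T ω)) = Real.exp (-(lam ^ (2 / 3 : ℝ))))
    (s : ℝ) (hs : 0 < s) :
    (∫ ω, T ω ^ (-s)) = 3/2 * Real.Gamma (3*s/2) / Real.Gamma s := by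
  set C : ℝ := 3/2 * Real.Gamma (3*s/2) / Real.Gamma s with hC
  have hΓs : 0 < Real.Gamma s := Real.Gamma_pos_of_pos hs
  have hΓ3 : 0 < Real.Gamma (3*s/2) := Real.Gamma_pos_of_pos (by linarith)
  have hCpos : 0 < C := by positivity
  -- step 1: pointwise Gamma representation
  have step1 : ∀ᵐ ω ∂(volume : Measure Ω),
      ENNReal.ofReal (T ω ^ (-s)) * ENNReal.ofReal (Real.Gamma s)
        = ∫⁻ l in Ioi (0:ℝ), ENNReal.ofReal (l ^ (s-1) * Real.exp (-(T ω) * l)) := by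
    filter_upwards [hTpos] with ω hω
    rw [← ENNReal.ofReal_mul (Real.rpow_nonneg hω.le _), ← gammaVal s (T ω) hs hω,
      ofReal_integral_eq_lintegral_ofReal (gammaInt s (T ω) hs hω)
        ((ae_restrict_iff' measurableSet_Ioi).2 (Filter.Eventually.of_forall fun x hx =>
          mul_nonneg (Real.rpow_nonneg (le_of_lt hx) _) (Real.exp_pos _).le))]
  have hswap :
      (∫⁻ ω, ∫⁻ l in Ioi (0:ℝ), ENNReal.ofReal (l ^ (s-1) * Real.exp (-(T ω) * l)))
      = ∫⁻ l in Ioi (0:ℝ), ∫⁻ ω, ENNReal.ofReal (l ^ (s-1) * Real.exp (-(T ω) * l)) := by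
    apply lintegral_lintegral_swap
    apply Measurable.aemeasurable
    fun_prop
  -- inner integral over Ω for fixed l > 0
  have hinner : ∀ l : ℝ, l ∈ Ioi (0:ℝ) →
      (∫⁻ ω, ENNReal.ofReal (l ^ (s-1) * Real.exp (-(T ω) * l)))
        = ENNReal.ofReal (l ^ (s-1) * Real.exp (-(l ^ (2/3 : ℝ)))) := by
    intro l hl
    have hint : Integrable (fun ω => Real.exp (-l * T ω)) (volume : Measure Ω) := by
      refine Integrable.mono' (integrable_const 1) ((hTmeas.const_mul (-l)).exp.aestronglyMeasurable) ?_
      filter_upwards [hTpos] with ω hω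
      rw [Real.norm_eq_abs, abs_of_pos (Real.exp_pos _)]
      exact Real.exp_le_one_iff.2 (by nlinarith [le_of_lt (mem_Ioi.mp hl)])
    have h2 : (∫⁻ ω, ENNReal.ofReal (Real.exp (-l * T ω)))
        = ENNReal.ofReal (Real.exp (-(l ^ (2/3 : ℝ)))) := by
      rw [← ofReal_integral_eq_lintegral_ofReal hint
        (Filter.Eventually.of_forall fun ω => (Real.exp_pos _).le), hlap l (le_of_lt hl)]
    calc (∫⁻ ω, ENNReal.ofReal (l ^ (s-1) * Real.exp (-(T ω) * l)))
        = ∫⁻ ω, ENNReal.ofReal (l ^ (s-1)) * ENNReal.ofReal (Real.exp (-l * T ω)) := by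
          congr 1; funext ω
          rw [← ENNReal.ofReal_mul (Real.rpow_nonneg (le_of_lt hl) _)]
          ring_nf
      _ = ENNReal.ofReal (l ^ (s-1)) * ∫⁻ ω, ENNReal.ofReal (Real.exp (-l * T ω)) := by
          rw [lintegral_const_mul _ (by fun_prop)]
      _ = ENNReal.ofReal (l ^ (s-1) * Real.exp (-(l ^ (2/3 : ℝ)))) := by
          rw [h2, ← ENNReal.ofReal_mul (Real.rpow_nonneg (le_of_lt hl) _)]
  -- outer integral over l
  have houter : (∫⁻ l in Ioi (0:ℝ), ENNReal.ofReal (l ^ (s-1) * Real.exp (-(l ^ (2/3 : ℝ)))))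
      = ENNReal.ofReal (3/2 * Real.Gamma (3*s/2)) := by
    rw [← ofReal_integral_eq_lintegral_ofReal (stableInt s hs)
      ((ae_restrict_iff' measurableSet_Ioi).2 (Filter.Eventually.of_forall fun x hx =>
        mul_nonneg (Real.rpow_nonneg (le_of_lt hx) _) (Real.exp_pos _).le)), stableVal s hs]
  have key : (∫⁻ ω, ENNReal.ofReal (T ω ^ (-s))) * ENNReal.ofReal (Real.Gamma s)
      = ENNReal.ofReal (3/2 * Real.Gamma (3*s/2)) := by
    rw [← lintegral_mul_const'' _ (by fun_prop : Measurable fun ω => ENNReal.ofReal (T ω ^ (-s))).aemeasurable]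
    rw [lintegral_congr_ae step1, hswap,
      setLIntegral_congr_fun measurableSet_Ioi hinner, houter]
  have hI : (∫⁻ ω, ENNReal.ofReal (T ω ^ (-s))) = ENNReal.ofReal C := by
    rw [← ENNReal.mul_left_inj (by simpa using hΓs) ENNReal.ofReal_ne_top
      (b := ENNReal.ofReal C), key, ← ENNReal.ofReal_mul hCpos.le, hC,
      div_mul_cancel₀ _ hΓs.ne']
  have hnn : 0 ≤ᵐ[volume] fun ω => T ω ^ (-s) := by
    filter_upwards [hTpos] with ω hω
    exact Real.rpow_nonneg hω.le _
  rw [integral_eq_lintegral_of_nonneg_ae hnn (Measurable.aestronglyMeasurable (by fun_prop (disch := exact hTmeas) : Measurable fun ω => T ω ^ (-s))), hI,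
    ENNReal.toReal_ofReal hCpos.le]

theorem stmt_8 {Ω : Type*} [MeasureSpace Ω] (hP : IsProbabilityMeasure (volume : Measure Ω))
    (T D : Ω → ℝ) (hTmeas : Measurable T) (hDmeas : Measurable D)
    (hTpos : ∀ᵐ ω ∂(volume : Measure Ω), 0 < T ω)
    (hlap : ∀ lam : ℝ, 0 ≤ lam →
      (∫ ω, Real.exp (-lam * T ω)) = Real.exp (-(lam ^ (2 / 3 : ℝ))))
    (hD : Measure.map D volume =
      volume.withDensity (fun x => ENNReal.ofReal (Set.indicator (Set.Icc 0 1) (fun y => 2 * y) x)))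
    (hindep : IndepFun D T)
    (n : ℕ) (hn : 1 ≤ n) :
    (∫ ω, (D ω * (T ω) ^ (-(1 / 2) : ℝ)) ^ n) =
      2 / (n + 2) * (Real.Gamma (3 * n / 4 + 1) / Real.Gamma (n / 2 + 1)) := by
  have hn0 : (0:ℝ) < n := by exact_mod_cast hn
  set s : ℝ := (n : ℝ) / 2 with hs_def
  have hs : 0 < s := by positivity
  -- independence of D^n and (T^(-1/2))^n
  have hφ : Measurable fun x : ℝ => x ^ n := measurable_id.pow_const n
  have hψ : Measurable fun t : ℝ => (t ^ (-(1/2) : ℝ)) ^ n := by fun_prop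
  have hindep2 : IndepFun (fun ω => D ω ^ n) (fun ω => (T ω ^ (-(1/2) : ℝ)) ^ n) volume :=
    hindep.comp hφ hψ
  have hmul : (∫ ω, (D ω * (T ω) ^ (-(1 / 2) : ℝ)) ^ n)
      = (∫ ω, D ω ^ n) * ∫ ω, (T ω ^ (-(1/2) : ℝ)) ^ n := by
    have := hindep2.integral_mul_eq_mul_integral (hφ.comp hDmeas).aestronglyMeasurable
      ((hψ.comp hTmeas).aestronglyMeasurable)
    simp only [Pi.mul_apply] at this
    rw [← this]
    congr 1
    funext ω
    simp [mul_pow]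
  have hTn : (∫ ω, (T ω ^ (-(1/2) : ℝ)) ^ n) = ∫ ω, T ω ^ (-s) := by
    refine integral_congr_ae ?_
    filter_upwards [hTpos] with ω hω
    rw [← Real.rpow_natCast (T ω ^ (-(1/2):ℝ)) n, ← Real.rpow_mul hω.le]
    congr 1
    rw [hs_def]; ring
  rw [hmul, hTn, Dmom D hDmeas hD n, Tmom hP T hTmeas hTpos hlap s hs]
  have h34 : (3:ℝ) * s / 2 = 3 * n / 4 := by rw [hs_def]; ring
  have hne1 : (3:ℝ) * n / 4 ≠ 0 := by positivity
  have hne2 : s ≠ 0 := hs.ne'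
  rw [h34]
  congr 1
  rw [show (3:ℝ)*(n:ℝ)/4 + 1 = (3*n/4) + 1 by ring, Real.Gamma_add_one hne1,
    show ((n:ℝ)/2 + 1 : ℝ) = s + 1 by rw [hs_def], Real.Gamma_add_one hne2]
  have hΓs : Real.Gamma s ≠ 0 := (Real.Gamma_pos_of_pos hs).ne'
  field_simp
  ring
end

section
/- Let F be the analytic function near 0 satisfying F(0) = 0 and F(λ) = λ·√(3/(3 + F(λ))). Then for every n ≥ 1, the n-th Taylor coefficient of F at 0 is [z^n]F(z) = ((−1)^{n−1}·3^{1−n}/n!)·Γ(3n/2 − 1)/Γ(n/2). -/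
open Complex Filter Topology

private lemma analyticOnNhd_iterDeriv {U : Set ℂ} {g : ℂ → ℂ}
    (hg : AnalyticOnNhd ℂ g U) (n : ℕ) : AnalyticOnNhd ℂ (iteratedDeriv n g) U := by
  induction n with
  | zero => simpa [iteratedDeriv_zero] using hg
  | succ n ih => rw [iteratedDeriv_succ]; exact ih.deriv

private lemma iter_zero_fun (n : ℕ) :
    iteratedDeriv n (fun _ : ℂ => (0:ℂ)) = fun _ => 0 := by
  induction n with
  | zero => simp [iteratedDeriv_zero]
  | succ n ih =>
    rw [iteratedDeriv_succ, ih]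
    funext x
    simp

private lemma iter_cmul {U : Set ℂ} (hU : IsOpen U) {g : ℂ → ℂ}
    (hg : AnalyticOnNhd ℂ g U) (c : ℂ) :
    ∀ n, ∀ z ∈ U, iteratedDeriv n (fun w => c * g w) z = c * iteratedDeriv n g z := by
  intro n
  induction n with
  | zero => intro z hz; simp
  | succ n ih =>
    intro z hz
    rw [iteratedDeriv_succ, iteratedDeriv_succ]
    have hev : iteratedDeriv n (fun w => c * g w) =ᶠ[𝓝 z]
        fun w => c * iteratedDeriv n g w := by
      filter_upwards [hU.mem_nhds hz] with w hw using ih w hw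
    rw [hev.deriv_eq]
    exact deriv_const_mul _ ((analyticOnNhd_iterDeriv hg n z hz).differentiableAt)

private lemma iter_add {U : Set ℂ} (hU : IsOpen U) {f g : ℂ → ℂ}
    (hf : AnalyticOnNhd ℂ f U) (hg : AnalyticOnNhd ℂ g U) :
    ∀ n, ∀ z ∈ U, iteratedDeriv n (fun w => f w + g w) z
      = iteratedDeriv n f z + iteratedDeriv n g z := by
  intro n
  induction n with
  | zero => intro z hz; simp
  | succ n ih =>
    intro z hz
    rw [iteratedDeriv_succ, iteratedDeriv_succ, iteratedDeriv_succ]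
    have hev : iteratedDeriv n (fun w => f w + g w) =ᶠ[𝓝 z]
        fun w => iteratedDeriv n f w + iteratedDeriv n g w := by
      filter_upwards [hU.mem_nhds hz] with w hw using ih w hw
    rw [hev.deriv_eq]
    exact deriv_add ((analyticOnNhd_iterDeriv hf n z hz).differentiableAt)
      ((analyticOnNhd_iterDeriv hg n z hz).differentiableAt)

private lemma iter_idmul {U : Set ℂ} (hU : IsOpen U) {g : ℂ → ℂ}
    (hg : AnalyticOnNhd ℂ g U) :
    ∀ n, ∀ z ∈ U, iteratedDeriv n (fun w => w * g w) z
      = z * iteratedDeriv n g z + (n : ℂ) * iteratedDeriv (n-1) g z := by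
  intro n
  induction n with
  | zero => intro z hz; simp
  | succ n ih =>
    intro z hz
    rw [iteratedDeriv_succ]
    have hev : iteratedDeriv n (fun w => w * g w) =ᶠ[𝓝 z]
        fun w => w * iteratedDeriv n g w + (n : ℂ) * iteratedDeriv (n-1) g w := by
      filter_upwards [hU.mem_nhds hz] with w hw using ih w hw
    rw [hev.deriv_eq]
    have hA : HasDerivAt (iteratedDeriv n g) (deriv (iteratedDeriv n g) z) z :=
      ((analyticOnNhd_iterDeriv hg n z hz).differentiableAt).hasDerivAt
    have hB : HasDerivAt (iteratedDeriv (n-1) g) (deriv (iteratedDeriv (n-1) g) z) z :=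
      ((analyticOnNhd_iterDeriv hg (n-1) z hz).differentiableAt).hasDerivAt
    have h1 : HasDerivAt (fun w => w * iteratedDeriv n g w + (n:ℂ) * iteratedDeriv (n-1) g w)
        (1 * iteratedDeriv n g z + z * deriv (iteratedDeriv n g) z
          + (n:ℂ) * deriv (iteratedDeriv (n-1) g) z) z :=
      ((hasDerivAt_id' z).mul hA).add (HasDerivAt.const_mul _ hB)
    rw [h1.deriv]
    rcases n with _ | m
    · simp only [Nat.cast_zero, zero_mul, add_zero, iteratedDeriv_zero, Nat.cast_one,
        iteratedDeriv_one]
      rw [iteratedDeriv_one, iteratedDeriv_zero]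
      ring
    · simp only [Nat.add_sub_cancel, ← iteratedDeriv_succ]
      push_cast
      ring


theorem stmt_9 (F : ℂ → ℂ) (hF : AnalyticAt ℂ F 0) (hF0 : F 0 = 0)
    (heq : ∀ᶠ z in nhds (0 : ℂ), F z = z * (3 / (3 + F z)) ^ ((1 : ℂ) / 2))
    (n : ℕ) (hn : 1 ≤ n) :
    iteratedDeriv n F 0 / (n.factorial : ℂ) =
      ((((-1 : ℝ) ^ (n - 1) * 3 ^ ((1 : ℝ) - n) / n.factorial) *
        (Real.Gamma (3 * n / 2 - 1) / Real.Gamma (n / 2)) : ℝ) : ℂ) := by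
  obtain ⟨r, hr0, hAn⟩ := hF.exists_ball_analyticOnNhd
  set U : Set ℂ := Metric.ball (0:ℂ) r with hUdef
  have hUopen : IsOpen U := Metric.isOpen_ball
  have hU0 : (0:ℂ) ∈ U := Metric.mem_ball_self hr0
  have hUnhds : U ∈ 𝓝 (0:ℂ) := hUopen.mem_nhds hU0
  set F1 : ℂ → ℂ := deriv F with hF1def
  set F2 : ℂ → ℂ := deriv F1 with hF2def
  have hAn1 : AnalyticOnNhd ℂ F1 U := hAn.deriv
  have hAn2 : AnalyticOnNhd ℂ F2 U := hAn1.deriv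
  have hsmall : ∀ᶠ z in 𝓝 (0:ℂ), ‖F z‖ < 2 := by
    have hc : ContinuousAt F 0 := hF.continuousAt
    have h2 : Metric.ball (0:ℂ) 2 ∈ 𝓝 (F 0) := by
      rw [hF0]; exact Metric.ball_mem_nhds _ (by norm_num)
    filter_upwards [hc.eventually_mem h2] with z hz
    simpa [Complex.dist_eq] using hz
  -- the algebraic equation
  have hE0 : ∀ᶠ z in 𝓝 (0:ℂ), (F z)^2 * (3 + F z) = 3 * z^2 := by
    filter_upwards [heq, hsmall] with z hz hlt
    have h3 : (3 : ℂ) + F z ≠ 0 := by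
      intro h
      have hFz : F z = -3 := by linear_combination h
      rw [hFz] at hlt
      norm_num at hlt
    have hw : (3 : ℂ) / (3 + F z) ≠ 0 := div_ne_zero (by norm_num) h3
    have hhalf : ((3:ℂ) / (3 + F z)) ^ ((1:ℂ)/2) * ((3:ℂ) / (3 + F z)) ^ ((1:ℂ)/2)
        = 3 / (3 + F z) := by
      rw [← Complex.cpow_add _ _ hw]
      norm_num
    have hsq : (F z)^2 = z^2 * (3 / (3 + F z)) := by
      calc (F z)^2 = (z * (3 / (3 + F z)) ^ ((1:ℂ)/2))^2 := by rw [← hz]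
        _ = z^2 * ((3 / (3 + F z)) ^ ((1:ℂ)/2) * (3 / (3 + F z)) ^ ((1:ℂ)/2)) := by ring
        _ = z^2 * (3 / (3 + F z)) := by rw [hhalf]
    field_simp at hsq
    linear_combination hsq
  -- first derivative of the equation
  have hG0 : (fun z => (F z)^2 * (3 + F z) - 3 * z^2) =ᶠ[𝓝 (0:ℂ)] (fun _ => 0) := by
    filter_upwards [hE0] with z h
    rw [h]; ring
  have hE1 : ∀ᶠ z in 𝓝 (0:ℂ), 3 * F z * F1 z * (2 + F z) = 6 * z := by
    filter_upwards [hG0.deriv, hUnhds] with z hdz hzU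
    have hFz : HasDerivAt F (F1 z) z := ((hAn z hzU).differentiableAt).hasDerivAt
    have hsq : HasDerivAt (fun w => (F w)^2) (2 * F z * F1 z) z := by
      simpa using hFz.fun_pow 2
    have h3F : HasDerivAt (fun w => (3:ℂ) + F w) (F1 z) z := hFz.const_add 3
    have hpw : HasDerivAt (fun w : ℂ => 3 * w^2) (3 * (2*z)) z := by
      simpa using (hasDerivAt_pow 2 z).const_mul (3:ℂ)
    have hfull : HasDerivAt (fun w => (F w)^2 * (3 + F w) - 3 * w^2)
        (2 * F z * F1 z * (3 + F z) + (F z)^2 * F1 z - 3 * (2*z)) z := (hsq.mul h3F).sub hpw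
    have h0 : deriv (fun w => (F w)^2 * (3 + F w) - 3 * w^2) z = 0 := by
      rw [hdz]; simp
    rw [hfull.deriv] at h0
    linear_combination h0
  -- second derivative of the equation
  have hE2 : ∀ᶠ z in 𝓝 (0:ℂ),
      3 * F2 z * F z * (2 + F z) + 6 * (1 + F z) * (F1 z)^2 = 6 := by
    have hG1 : (fun z => 3 * F z * F1 z * (2 + F z) - 6 * z) =ᶠ[𝓝 (0:ℂ)] (fun _ => 0) := by
      filter_upwards [hE1] with z h
      rw [h]; ring
    filter_upwards [hG1.deriv, hUnhds] with z hdz hzU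
    have hFz : HasDerivAt F (F1 z) z := ((hAn z hzU).differentiableAt).hasDerivAt
    have hF1z : HasDerivAt F1 (F2 z) z := ((hAn1 z hzU).differentiableAt).hasDerivAt
    have hab : HasDerivAt (fun w => 3 * F w * F1 w) (3 * F1 z * F1 z + 3 * F z * F2 z) z :=
      (hFz.const_mul 3).mul hF1z
    have h2F : HasDerivAt (fun w => (2:ℂ) + F w) (F1 z) z := hFz.const_add 2
    have hlin : HasDerivAt (fun w : ℂ => 6 * w) (6 * 1) z :=
      HasDerivAt.const_mul (6:ℂ) (hasDerivAt_id' z)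
    have hfull : HasDerivAt (fun w => 3 * F w * F1 w * (2 + F w) - 6 * w)
        ((3 * F1 z * F1 z + 3 * F z * F2 z) * (2 + F z) + 3 * F z * F1 z * F1 z - 6 * 1) z :=
      (hab.mul h2F).sub hlin
    have h0 : deriv (fun w => 3 * F w * F1 w * (2 + F w) - 6 * w) z = 0 := by
      rw [hdz]; simp
    rw [hfull.deriv] at h0
    linear_combination h0
  -- the linear ODE, away from 0
  have hLpunct : ∀ᶠ z in 𝓝 (0:ℂ), z ≠ 0 →
      12 * F2 z + (-9 * (z * (z * F2 z)) + (-9 * (z * F1 z) + (4 * F z + 4))) = 0 := by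
    filter_upwards [hE0, hE1, hE2, hsmall] with z p0 p1 p2 hlt
    intro hz0
    have hFne : F z ≠ 0 := by
      intro h
      have h2 : (3:ℂ) * z^2 = 0 := by rw [← p0, h]; ring
      have h3 : z ^ 2 = 0 := by linear_combination h2 / 3
      exact hz0 (pow_eq_zero_iff (n := 2) (by norm_num) |>.mp h3)
    have h2F : (2:ℂ) + F z ≠ 0 := by
      intro h
      have hFz : F z = -2 := by linear_combination h
      rw [hFz] at hlt
      norm_num at hlt
    have key : (F z * (2 + F z))^3 *
        (12 * F2 z + (-9 * (z * (z * F2 z)) + (-9 * (z * F1 z) + (4 * F z + 4)))) = 0 := by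
      linear_combination
        (4*(F z)^4 + 16*(F z)^3 + 24*(F z)^2 + 32*(F z) + 32 - 24*z^2*(F z) - 24*z^2) * p0
        + (-3*z*(F z * (2 + F z))^2
            - (2/3)*(1 + F z)*(4 - 3*z^2)*(3*(F z)*(F1 z)*(2 + F z) + 6*z)) * p1
        + ((4 - 3*z^2)*(F z * (2 + F z))^2) * p2
    rcases mul_eq_zero.mp key with h | h
    · exact absurd (pow_eq_zero_iff (by norm_num) |>.mp h)
        (mul_ne_zero hFne h2F)
    · exact h
  -- the linear ODE near 0
  have hL : (fun z => 12 * F2 z + (-9 * (z * (z * F2 z)) + (-9 * (z * F1 z) + (4 * F z + 4))))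
      =ᶠ[𝓝 (0:ℂ)] (fun _ => 0) := by
    have hLan : AnalyticAt ℂ
        (fun z => 12 * F2 z + (-9 * (z * (z * F2 z)) + (-9 * (z * F1 z) + (4 * F z + 4)))) 0 := by
      have a2 : AnalyticAt ℂ F2 0 := hAn2 0 hU0
      have a1 : AnalyticAt ℂ F1 0 := hAn1 0 hU0
      have a0 : AnalyticAt ℂ F 0 := hAn 0 hU0
      have aid : AnalyticAt ℂ (fun z : ℂ => z) 0 := analyticAt_id
      exact (analyticAt_const.mul a2).add
        ((analyticAt_const.mul (aid.mul (aid.mul a2))).add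
          ((analyticAt_const.mul (aid.mul a1)).add
            ((analyticAt_const.mul a0).add analyticAt_const)))
    have hL0 : 12 * F2 0 + (-9 * ((0:ℂ) * ((0:ℂ) * F2 0)) + (-9 * ((0:ℂ) * F1 0) + (4 * F 0 + 4)))
        = 0 := by
      have t1 : Filter.Tendsto
          (fun z => 12 * F2 z + (-9 * (z * (z * F2 z)) + (-9 * (z * F1 z) + (4 * F z + 4))))
          (𝓝[≠] (0:ℂ))
          (𝓝 (12 * F2 0 + (-9 * ((0:ℂ) * ((0:ℂ) * F2 0)) + (-9 * ((0:ℂ) * F1 0) + (4 * F 0 + 4))))) :=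
        hLan.continuousAt.continuousWithinAt
      have hEqp : (fun z => 12 * F2 z + (-9 * (z * (z * F2 z)) + (-9 * (z * F1 z) + (4 * F z + 4))))
          =ᶠ[𝓝[≠] (0:ℂ)] (fun _ => 0) := by
        filter_upwards [hLpunct.filter_mono nhdsWithin_le_nhds, self_mem_nhdsWithin] with z h hz
        exact h hz
      have t2 : Filter.Tendsto
          (fun z => 12 * F2 z + (-9 * (z * (z * F2 z)) + (-9 * (z * F1 z) + (4 * F z + 4))))
          (𝓝[≠] (0:ℂ)) (𝓝 0) := by
        rw [Filter.tendsto_congr' hEqp]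
        exact tendsto_const_nhds
      exact tendsto_nhds_unique t1 t2
    filter_upwards [hLpunct] with z h
    by_cases hz : z = 0
    · subst hz; exact hL0
    · exact h hz
  have hIter : ∀ m : ℕ, iteratedDeriv m
      (fun z => 12 * F2 z + (-9 * (z * (z * F2 z)) + (-9 * (z * F1 z) + (4 * F z + 4)))) 0 = 0 := by
    intro m
    rw [Filter.EventuallyEq.iteratedDeriv_eq m hL, iter_zero_fun]
  -- iterated derivative identities
  have hF1iter : ∀ j, iteratedDeriv j F1 0 = iteratedDeriv (j+1) F 0 := by
    intro j; rw [hF1def, ← iteratedDeriv_succ']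
  have hF2iter : ∀ j, iteratedDeriv j F2 0 = iteratedDeriv (j+1+1) F 0 := by
    intro j; rw [hF2def, hF1def, ← iteratedDeriv_succ', ← iteratedDeriv_succ']
  -- the recurrence
  have hA_zF2 : AnalyticOnNhd ℂ (fun w => w * F2 w) U := fun z hz => analyticAt_id.mul (hAn2 z hz)
  have hA_zzF2 : AnalyticOnNhd ℂ (fun w => w * (w * F2 w)) U :=
    fun z hz => analyticAt_id.mul (hA_zF2 z hz)
  have hA_zF1 : AnalyticOnNhd ℂ (fun w => w * F1 w) U := fun z hz => analyticAt_id.mul (hAn1 z hz)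
  have hrec : ∀ m : ℕ, 1 ≤ m →
      12 * iteratedDeriv (m+2) F 0 = (9*(m:ℂ)^2 - 4) * iteratedDeriv m F 0 := by
    intro m hm
    obtain ⟨k, rfl⟩ : ∃ k, m = k + 1 := ⟨m - 1, (Nat.succ_pred_eq_of_pos hm).symm⟩
    have hA_t234 : AnalyticOnNhd ℂ
        (fun w => -9 * (w * (w * F2 w)) + (-9 * (w * F1 w) + (4 * F w + 4))) U :=
      fun z hz => (analyticAt_const.mul (hA_zzF2 z hz)).add
        ((analyticAt_const.mul (hA_zF1 z hz)).add
          ((analyticAt_const.mul (hAn z hz)).add analyticAt_const))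
    have hA_t34 : AnalyticOnNhd ℂ (fun w => -9 * (w * F1 w) + (4 * F w + 4)) U :=
      fun z hz => (analyticAt_const.mul (hA_zF1 z hz)).add
        ((analyticAt_const.mul (hAn z hz)).add analyticAt_const)
    have s0 : iteratedDeriv (k+1) (fun z => 12 * F2 z +
          (-9 * (z * (z * F2 z)) + (-9 * (z * F1 z) + (4 * F z + 4)))) 0
        = iteratedDeriv (k+1) (fun w => 12 * F2 w) 0 +
          iteratedDeriv (k+1)
            (fun w => -9 * (w * (w * F2 w)) + (-9 * (w * F1 w) + (4 * F w + 4))) 0 :=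
      iter_add hUopen (fun z hz => analyticAt_const.mul (hAn2 z hz)) hA_t234 (k+1) 0 hU0
    have s1 : iteratedDeriv (k+1)
          (fun w => -9 * (w * (w * F2 w)) + (-9 * (w * F1 w) + (4 * F w + 4))) 0
        = iteratedDeriv (k+1) (fun w => -9 * (w * (w * F2 w))) 0 +
          iteratedDeriv (k+1) (fun w => -9 * (w * F1 w) + (4 * F w + 4)) 0 :=
      iter_add hUopen (fun z hz => analyticAt_const.mul (hA_zzF2 z hz)) hA_t34 (k+1) 0 hU0
    have s2 : iteratedDeriv (k+1) (fun w => -9 * (w * F1 w) + (4 * F w + 4)) 0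
        = iteratedDeriv (k+1) (fun w => -9 * (w * F1 w)) 0 +
          iteratedDeriv (k+1) (fun w => 4 * F w + 4) 0 :=
      iter_add hUopen (fun z hz => analyticAt_const.mul (hA_zF1 z hz))
        (fun z hz => (analyticAt_const.mul (hAn z hz)).add analyticAt_const) (k+1) 0 hU0
    have s3 : iteratedDeriv (k+1) (fun w => 4 * F w + 4) 0
        = iteratedDeriv (k+1) (fun w => 4 * F w) 0 + iteratedDeriv (k+1) (fun _ : ℂ => (4:ℂ)) 0 :=
      iter_add hUopen (fun z hz => analyticAt_const.mul (hAn z hz))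
        (fun z hz => analyticAt_const) (k+1) 0 hU0
    have s4 : iteratedDeriv (k+1) (fun _ : ℂ => (4:ℂ)) 0 = 0 := by
      rw [iteratedDeriv_succ']
      have hdc : deriv (fun _ : ℂ => (4:ℂ)) = fun _ => (0:ℂ) := by
        funext x; simp
      rw [hdc, iter_zero_fun]
    have s5 : iteratedDeriv (k+1) (fun w => 4 * F w) 0 = 4 * iteratedDeriv (k+1) F 0 :=
      iter_cmul hUopen hAn 4 (k+1) 0 hU0
    have s6 : iteratedDeriv (k+1) (fun w => 12 * F2 w) 0 = 12 * iteratedDeriv (k+1+1+1) F 0 := by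
      rw [iter_cmul hUopen hAn2 12 (k+1) 0 hU0, hF2iter (k+1)]
    have s7 : iteratedDeriv (k+1) (fun w => -9 * (w * F1 w)) 0
        = -9 * (((k+1:ℕ):ℂ) * iteratedDeriv (k+1) F 0) := by
      rw [iter_cmul hUopen hA_zF1 (-9) (k+1) 0 hU0, iter_idmul hUopen hAn1 (k+1) 0 hU0]
      simp only [Nat.add_sub_cancel, zero_mul, zero_add, hF1iter k]
    have s8 : iteratedDeriv (k+1) (fun w => -9 * (w * (w * F2 w))) 0
        = -9 * (((k+1:ℕ):ℂ) * ((k:ℕ):ℂ) * iteratedDeriv (k+1) F 0) := by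
      rw [iter_cmul hUopen hA_zzF2 (-9) (k+1) 0 hU0, iter_idmul hUopen hA_zF2 (k+1) 0 hU0]
      simp only [Nat.add_sub_cancel, zero_mul, zero_add]
      rcases k with _ | j
      · simp [iteratedDeriv_zero]
      · rw [iter_idmul hUopen hAn2 (j+1) 0 hU0]
        simp only [Nat.add_sub_cancel, zero_mul, zero_add, hF2iter j]
        push_cast
        ring
    have main := hIter (k+1)
    rw [s0, s1, s2, s3, s4, s5, s6, s7, s8] at main
    have hidx : k+1+1+1 = k+1+2 := rfl
    rw [hidx] at main
    push_cast at main ⊢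
    linear_combination main
  -- first derivative at 0
  have hd1 : iteratedDeriv 1 F 0 = 1 := by
    rw [iteratedDeriv_one]
    have hψd : DifferentiableAt ℂ (fun z => ((3:ℂ) / (3 + F z)) ^ ((1:ℂ)/2)) 0 := by
      apply DifferentiableAt.cpow
      · exact (differentiableAt_const _).div ((differentiableAt_const _).add hF.differentiableAt)
          (by rw [hF0]; norm_num)
      · exact differentiableAt_const _
      · rw [hF0]
        norm_num [Complex.mem_slitPlane_iff]
    have hψ : HasDerivAt (fun z => ((3:ℂ) / (3 + F z)) ^ ((1:ℂ)/2))
        (deriv (fun z => ((3:ℂ) / (3 + F z)) ^ ((1:ℂ)/2)) 0) 0 := hψd.hasDerivAt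
    have hprod : HasDerivAt (fun z => z * ((3:ℂ) / (3 + F z)) ^ ((1:ℂ)/2))
        (1 * ((3:ℂ) / (3 + F 0)) ^ ((1:ℂ)/2)
          + 0 * deriv (fun z => ((3:ℂ) / (3 + F z)) ^ ((1:ℂ)/2)) 0) 0 :=
      (hasDerivAt_id' 0).mul hψ
    rw [Filter.EventuallyEq.deriv_eq heq, hprod.deriv, hF0]
    norm_num
  -- second derivative at 0
  have hd2 : iteratedDeriv 2 F 0 = -(1/3) := by
    have h0 := hIter 0
    simp only [iteratedDeriv_zero] at h0
    rw [hF2def, hF1def] at h0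
    show iteratedDeriv (1+1) F 0 = _
    rw [iteratedDeriv_succ', iteratedDeriv_succ', iteratedDeriv_zero]
    rw [hF0] at h0
    linear_combination h0 / 12
  -- closed form coefficients
  set c : ℕ → ℝ := fun m => (-1 : ℝ) ^ (m - 1) * 3 ^ ((1 : ℝ) - m) / m.factorial *
      (Real.Gamma (3 * m / 2 - 1) / Real.Gamma (m / 2)) with hcdef
  have hc1 : c 1 = 1 := by
    have hg : Real.Gamma (1/2) ≠ 0 := (Real.Gamma_pos_of_pos (by norm_num)).ne'
    simp only [hcdef]
    rw [show ((1:ℝ) - ((1:ℕ):ℝ)) = 0 by norm_num, Real.rpow_zero,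
      show (3*((1:ℕ):ℝ)/2 - 1) = 1/2 by norm_num, show (((1:ℕ):ℝ)/2) = 1/2 by norm_num,
      div_self hg]
    norm_num
  have hc2 : c 2 = -(1/6) := by
    simp only [hcdef]
    rw [show ((1:ℝ) - ((2:ℕ):ℝ)) = -1 by norm_num, Real.rpow_neg_one,
      show (3*((2:ℕ):ℝ)/2 - 1) = 2 by norm_num, show (((2:ℕ):ℝ)/2) = 1 by norm_num,
      Real.Gamma_two, Real.Gamma_one]
    norm_num [Nat.factorial]
  have hstep : ∀ k : ℕ, 1 ≤ k →
      12 * ((k+2).factorial : ℝ) * c (k+2) = (9*(k:ℝ)^2 - 4) * (k.factorial : ℝ) * c k := by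
    intro k hk
    obtain ⟨j, rfl⟩ : ∃ j, k = j + 1 := ⟨k - 1, (Nat.succ_pred_eq_of_pos hk).symm⟩
    have hjr : (0:ℝ) ≤ (j:ℝ) := Nat.cast_nonneg j
    have hyp : (0:ℝ) < 3*((j:ℝ)+1)/2 - 1 := by linarith
    have hxp : (0:ℝ) < ((j:ℝ)+1)/2 := by linarith
    have hgx : Real.Gamma (((j:ℝ)+1)/2) ≠ 0 := (Real.Gamma_pos_of_pos hxp).ne'
    have hfac : ((j+1+2).factorial : ℝ)
        = (((j:ℝ))+3) * (((j:ℝ))+2) * ((j+1).factorial : ℝ) := by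
      rw [show j+1+2 = (j+2)+1 by omega, Nat.factorial_succ, show j+2 = (j+1)+1 by omega,
        Nat.factorial_succ]
      push_cast
      ring
    have hexp : ((-1:ℝ))^(j+1+2-1) = (-1:ℝ)^(j+1-1) := by
      rw [show j+1+2-1 = (j+1-1) + 2 by omega, pow_add]
      norm_num
    have hpow : (3:ℝ) ^ ((1:ℝ) - ((j+1+2:ℕ):ℝ)) = (3:ℝ) ^ ((1:ℝ) - ((j+1:ℕ):ℝ)) / 9 := by
      rw [show ((1:ℝ) - ((j+1+2:ℕ):ℝ)) = ((1:ℝ) - ((j+1:ℕ):ℝ)) - 2 by push_cast; ring,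
        Real.rpow_sub (by norm_num : (0:ℝ) < 3), Real.rpow_two]
      norm_num
    have hpow' : (0:ℝ) < (3:ℝ) ^ ((1:ℝ) - ((j+1:ℕ):ℝ)) := Real.rpow_pos_of_pos (by norm_num) _
    have hg3 : Real.Gamma (3*((j+1+2:ℕ):ℝ)/2 - 1)
        = ((3*((j:ℝ)+1)/2 - 1) + 1 + 1) * (((3*((j:ℝ)+1)/2 - 1) + 1) * ((3*((j:ℝ)+1)/2 - 1)
            * Real.Gamma (3*((j:ℝ)+1)/2 - 1))) := by
      rw [show (3*((j+1+2:ℕ):ℝ)/2 - 1) = ((3*((j:ℝ)+1)/2 - 1) + 1 + 1) + 1 by push_cast; ring,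
        Real.Gamma_add_one (by linarith), Real.Gamma_add_one (by linarith),
        Real.Gamma_add_one (by linarith)]
    have hg1 : Real.Gamma (((j+1+2:ℕ):ℝ)/2)
        = (((j:ℝ)+1)/2) * Real.Gamma (((j:ℝ)+1)/2) := by
      rw [show (((j+1+2:ℕ):ℝ)/2) = (((j:ℝ)+1)/2) + 1 by push_cast; ring,
        Real.Gamma_add_one (by linarith)]
    have hfacne : ((j+1).factorial : ℝ) ≠ 0 := Nat.cast_ne_zero.mpr (j+1).factorial_ne_zero
    simp only [hcdef]
    rw [hfac, hexp, hpow, hg3, hg1]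
    rw [show ((j+1:ℕ):ℝ) = (j:ℝ)+1 by push_cast; ring]
    field_simp
    ring
  have key : ∀ m : ℕ, 1 ≤ m → iteratedDeriv m F 0 = ((m.factorial : ℂ)) * ((c m : ℝ) : ℂ) := by
    intro m
    induction m using Nat.strong_induction_on with
    | _ m IH =>
      intro hm
      match m, hm with
      | 1, _ =>
        rw [hd1, hc1]
        norm_num [Nat.factorial]
      | 2, _ =>
        rw [hd2, hc2]
        push_cast
        norm_num [Nat.factorial]
      | (j+3), _ =>
        have h1j : 1 ≤ j+1 := Nat.le_add_left 1 j
        have hr := hrec (j+1) h1j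
        have hIH := IH (j+1) (by omega) h1j
        have hs := hstep (j+1) h1j
        have hsC : (12:ℂ) * (((j+1+2).factorial : ℕ):ℂ) * ((c (j+1+2) : ℝ):ℂ)
            = (9*(((j+1:ℕ)):ℂ)^2 - 4) * (((j+1).factorial : ℕ):ℂ) * ((c (j+1) : ℝ):ℂ) := by
          exact_mod_cast congrArg (Complex.ofReal) hs
        have hidx : j+1+2 = j+3 := rfl
        rw [hidx] at hr hsC
        linear_combination hr/12 + ((9*(((j+1:ℕ)):ℂ)^2 - 4)/12) * hIH + (-1/12) * hsC
  have hfac : ((n.factorial : ℂ)) ≠ 0 := Nat.cast_ne_zero.mpr n.factorial_ne_zero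
  rw [key n hn]
  show ((n.factorial : ℂ)) * ((c n : ℝ) : ℂ) / (n.factorial : ℂ) = ((c n : ℝ) : ℂ)
  field_simp
end

section
/- For every integer n ≥ 2, the terminating hypergeometric sum ₂F₁(−n+1, n; −2n−1; 1/2) equals (2^{2n+1}/√π)·Γ(n/2 + 3/2)·Γ(3n/2 + 1)/Γ(2n + 2). -/
open Finset

lemma asc_eval_neg : ∀ (j k : ℕ), (ascPochhammer ℝ j).eval (-(j + k : ℕ) : ℝ) * (k.factorial : ℝ)
    = (-1)^j * ((j + k).factorial : ℝ) := by
  intro j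
  induction j with
  | zero => intro k; simp
  | succ j ih =>
    intro k
    have h := ih (k + 1)
    rw [ascPochhammer_succ_eval]
    have harg : (-(j + 1 + k : ℕ) : ℝ) = (-(j + (k+1) : ℕ) : ℝ) := by push_cast; ring
    rw [harg]
    have hf : ((k+1).factorial : ℝ) = (k.factorial : ℝ) * (k+1) := by
      rw [Nat.factorial_succ]; push_cast; ring
    have hf2 : ((j + 1 + k).factorial : ℝ) = ((j + (k+1)).factorial : ℝ) := by
      rw [show j + 1 + k = j + (k+1) from by omega]
    -- from h : eval * (k+1)! = (-1)^j * (j+k+1)!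
    have hkne : ((k:ℝ) + 1) ≠ 0 := by positivity
    have : (ascPochhammer ℝ j).eval (-(j + (k+1) : ℕ) : ℝ) * (k.factorial : ℝ)
        = (-1)^j * ((j + (k+1)).factorial : ℝ) / ((k:ℝ)+1) := by
      rw [eq_div_iff hkne]
      calc (ascPochhammer ℝ j).eval (-(j + (k+1) : ℕ) : ℝ) * (k.factorial : ℝ) * ((k:ℝ)+1)
          = (ascPochhammer ℝ j).eval (-(j + (k+1) : ℕ) : ℝ) * ((k+1).factorial : ℝ) := by
            rw [hf]; ring
        _ = (-1)^j * ((j + (k+1)).factorial : ℝ) := h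
    rw [mul_right_comm, this, hf2]
    have harg2 : (-(j + (k+1) : ℕ) : ℝ) + (j:ℝ) = -((k:ℝ)+1) := by push_cast; ring
    rw [harg2]
    field_simp
    ring

lemma asc_eval_pos : ∀ (j m : ℕ), (ascPochhammer ℝ j).eval ((m + 1 : ℕ) : ℝ) * (m.factorial : ℝ)
    = ((m + j).factorial : ℝ) := by
  intro j
  induction j with
  | zero => intro m; simp
  | succ j ih =>
    intro m
    rw [ascPochhammer_succ_eval, mul_right_comm, ih m]
    have : ((m + 1 : ℕ) : ℝ) + (j : ℝ) = ((m + j + 1 : ℕ) : ℝ) := by push_cast; ring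
    rw [this, show m + (j+1) = (m + j) + 1 from by omega, Nat.factorial_succ]
    push_cast; ring

lemma asc_eval_neg_zero (j m : ℕ) (h : m < j) : (ascPochhammer ℝ j).eval (-(m : ℕ) : ℝ) = 0 :=
  ascPochhammer_eval_neg_coe_nat_of_lt h

noncomputable def Ft (n j : ℕ) : ℝ :=
  if j < n then ((n+j-1).factorial * (2*n+1-j).factorial : ℝ) /
    ((n-1-j).factorial * (2*n+1).factorial * 2^j * j.factorial) else 0

noncomputable def Nc (n j : ℝ) : ℝ :=
  -2*j^6 + 16*j^5 - 70*j^4 + 32*j^3 + 264*j^2 - 288*j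
  + n*(8*j^5 - 56*j^4 - 24*j^3 + 904*j^2 - 1200*j)
  + n^2*(-8*j^4 - 60*j^3 + 996*j^2 - 1816*j)
  + n^3*(-20*j^3 + 430*j^2 - 1252*j)
  + n^4*(62*j^2 - 392*j)
  + n^5*(-44*j)

noncomputable def Gt (n j : ℕ) : ℝ :=
  if j ≤ n+1 then Nc n j * ((n+j-1).factorial * (2*n+1-j).factorial : ℝ) /
    (((n:ℝ)+2) * (n+1-j).factorial * (2*n+1).factorial * 2^j * j.factorial) else 0

noncomputable def aR (n : ℕ) : ℝ := 4*((n:ℝ)+1)*(2*(n:ℝ)+3)*(2*(n:ℝ)+5)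
noncomputable def bR (n : ℕ) : ℝ := 3*(3*(n:ℝ)+2)*(3*(n:ℝ)+4)*((n:ℝ)+3)

lemma Ft_eval (j k : ℕ) : Ft (j+k+1) j =
    ((2*j+k).factorial * (j+2*k+3).factorial : ℝ) /
      (k.factorial * (2*j+2*k+3).factorial * 2^j * j.factorial) := by
  rw [Ft, if_pos (by omega)]
  rw [show j+k+1+j-1 = 2*j+k from by omega, show 2*(j+k+1)+1-j = j+2*k+3 from by omega,
    show j+k+1-1-j = k from by omega, show 2*(j+k+1)+1 = 2*j+2*k+3 from by omega]

lemma Gt_eval (j k : ℕ) : Gt (j+k+1) j =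
    Nc ((j:ℝ)+k+1) j * ((2*j+k).factorial * (j+2*k+3).factorial : ℝ) /
      (((j:ℝ)+k+3) * (k+2).factorial * (2*j+2*k+3).factorial * 2^j * j.factorial) := by
  rw [Gt, if_pos (by omega)]
  rw [show j+k+1+j-1 = 2*j+k from by omega, show 2*(j+k+1)+1-j = j+2*k+3 from by omega,
    show j+k+1+1-j = k+2 from by omega, show 2*(j+k+1)+1 = 2*j+2*k+3 from by omega]
  push_cast
  ring_nf

lemma Gt_eval' (j k : ℕ) : Gt (j+k+1) (j+1) =
    Nc ((j:ℝ)+k+1) ((j:ℝ)+1) * ((2*j+k+1).factorial * (j+2*k+2).factorial : ℝ) /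
      (((j:ℝ)+k+3) * (k+1).factorial * (2*j+2*k+3).factorial * 2^(j+1) * (j+1).factorial) := by
  rw [Gt, if_pos (by omega)]
  rw [show j+k+1+(j+1)-1 = 2*j+k+1 from by omega, show 2*(j+k+1)+1-(j+1) = j+2*k+2 from by omega,
    show j+k+1+1-(j+1) = k+1 from by omega, show 2*(j+k+1)+1 = 2*j+2*k+3 from by omega]
  push_cast
  ring_nf

lemma Gt_zero (n : ℕ) : Gt n 0 = 0 := by
  rw [Gt, if_pos (by omega), Nc]
  norm_num

lemma fact_ne (m : ℕ) : ((m.factorial : ℝ)) ≠ 0 :=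
  Nat.cast_ne_zero.mpr (Nat.factorial_ne_zero m)

set_option maxHeartbeats 1000000 in
lemma cert (n j : ℕ) (hn : 2 ≤ n) (hj : j ≤ n + 1) :
    aR n * Ft (n+2) j - bR n * Ft n j = Gt n (j+1) - Gt n j := by
  rcases lt_or_ge j n with hjn | hjn
  · -- generic case
    obtain ⟨k, rfl⟩ : ∃ k, n = j + k + 1 := ⟨n - j - 1, by omega⟩
    have e2 : Ft (j+k+1+2) j = ((2*j+(k+2)).factorial * (j+2*(k+2)+3).factorial : ℝ) /
        ((k+2).factorial * (2*j+2*(k+2)+3).factorial * 2^j * j.factorial) := by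
      rw [show j+k+1+2 = j+(k+2)+1 from by omega, Ft_eval]
    rw [e2, Ft_eval, Gt_eval, Gt_eval']
    rw [show 2*j+(k+2) = 2*j+k+2 from by omega, show j+2*(k+2)+3 = j+2*k+7 from by omega,
      show 2*j+2*(k+2)+3 = 2*j+2*k+7 from by omega]
    have hAne : ((2*j+k).factorial : ℝ) ≠ 0 := fact_ne _
    have hBne : (((j+2*k).factorial : ℝ)) ≠ 0 := fact_ne _
    have hKne : ((k.factorial : ℝ)) ≠ 0 := fact_ne _
    have hDne : (((2*j+2*k).factorial : ℝ)) ≠ 0 := fact_ne _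
    have hJne : ((j.factorial : ℝ)) ≠ 0 := fact_ne _
    have h2j : (2:ℝ)^j ≠ 0 := by positivity
    rw [aR, bR, Nc, Nc]
    simp only [Nat.factorial_succ, pow_succ]
    push_cast
    field_simp
    ring
  · rcases (show j = n ∨ j = n + 1 from by omega) with rfl | rfl
    · -- j = n
      obtain ⟨m, rfl⟩ : ∃ m, j = m + 2 := ⟨j - 2, by omega⟩
      have hFt0 : Ft (m+2) (m+2) = 0 := by rw [Ft, if_neg (by omega)]
      have e2 : Ft (m+2+2) (m+2) = ((2*m+5).factorial * (m+7).factorial : ℝ) /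
          ((1).factorial * (2*m+9).factorial * 2^(m+2) * (m+2).factorial) := by
        rw [Ft, if_pos (by omega)]
        rw [show m+2+2+(m+2)-1 = 2*m+5 from by omega, show 2*(m+2+2)+1-(m+2) = m+7 from by omega,
          show m+2+2-1-(m+2) = 1 from by omega, show 2*(m+2+2)+1 = 2*m+9 from by omega]
      have eG1 : Gt (m+2) (m+3) = Nc ((m:ℝ)+2) ((m:ℝ)+3) * ((2*m+4).factorial * (m+2).factorial : ℝ) /
          (((m:ℝ)+4) * (0).factorial * (2*m+5).factorial * 2^(m+3) * (m+3).factorial) := by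
        rw [Gt, if_pos (by omega)]
        rw [show m+2+(m+3)-1 = 2*m+4 from by omega, show 2*(m+2)+1-(m+3) = m+2 from by omega,
          show m+2+1-(m+3) = 0 from by omega, show 2*(m+2)+1 = 2*m+5 from by omega]
        push_cast; ring_nf
      have eG0 : Gt (m+2) (m+2) = Nc ((m:ℝ)+2) ((m:ℝ)+2) * ((2*m+3).factorial * (m+3).factorial : ℝ) /
          (((m:ℝ)+4) * (1).factorial * (2*m+5).factorial * 2^(m+2) * (m+2).factorial) := by
        rw [Gt, if_pos (by omega)]
        rw [show m+2+(m+2)-1 = 2*m+3 from by omega, show 2*(m+2)+1-(m+2) = m+3 from by omega,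
          show m+2+1-(m+2) = 1 from by omega, show 2*(m+2)+1 = 2*m+5 from by omega]
        push_cast; ring_nf
    -- now combine
      rw [hFt0, e2, eG1, eG0]
      have hAne : (((2*m).factorial : ℝ)) ≠ 0 := fact_ne _
      have hMne : ((m.factorial : ℝ)) ≠ 0 := fact_ne _
      have h2j : (2:ℝ)^m ≠ 0 := by positivity
      rw [aR, bR, Nc, Nc]
      simp only [Nat.factorial_succ, Nat.factorial_zero, pow_succ]
      push_cast
      field_simp
      ring
    · -- j = n+1
      obtain ⟨m, rfl⟩ : ∃ m, n = m + 2 := ⟨n - 2, by omega⟩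
      have hFt0 : Ft (m+2) (m+3) = 0 := by rw [Ft, if_neg (by omega)]
      have e2 : Ft (m+2+2) (m+3) = ((2*m+6).factorial * (m+6).factorial : ℝ) /
          ((0).factorial * (2*m+9).factorial * 2^(m+3) * (m+3).factorial) := by
        rw [Ft, if_pos (by omega)]
        rw [show m+2+2+(m+3)-1 = 2*m+6 from by omega, show 2*(m+2+2)+1-(m+3) = m+6 from by omega,
          show m+2+2-1-(m+3) = 0 from by omega, show 2*(m+2+2)+1 = 2*m+9 from by omega]
      have hG2 : Gt (m+2) (m+4) = 0 := by rw [Gt, if_neg (by omega)]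
      have hG1 : Gt (m+2) (m+3) = Nc ((m:ℝ)+2) ((m:ℝ)+3) * ((2*m+4).factorial * (m+2).factorial : ℝ) /
          (((m:ℝ)+4) * (0).factorial * (2*m+5).factorial * 2^(m+3) * (m+3).factorial) := by
        rw [Gt, if_pos (by omega)]
        rw [show m+2+(m+3)-1 = 2*m+4 from by omega, show 2*(m+2)+1-(m+3) = m+2 from by omega,
          show m+2+1-(m+3) = 0 from by omega, show 2*(m+2)+1 = 2*m+5 from by omega]
        push_cast; ring_nf
      rw [show m+3+1 = m+4 from by omega, hFt0, e2, hG2, hG1]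
      have hAne : (((2*m).factorial : ℝ)) ≠ 0 := fact_ne _
      have hMne : ((m.factorial : ℝ)) ≠ 0 := fact_ne _
      have h2j : (2:ℝ)^m ≠ 0 := by positivity
      rw [aR, bR, Nc]
      simp only [Nat.factorial_succ, Nat.factorial_zero, pow_succ]
      push_cast
      field_simp
      ring

noncomputable def pochterm (n j : ℕ) : ℝ :=
  ((ascPochhammer ℝ j).eval (-(n : ℝ) + 1) * (ascPochhammer ℝ j).eval (n : ℝ) /
      (ascPochhammer ℝ j).eval (-2 * (n : ℝ) - 1)) * (1 / 2 : ℝ) ^ j / (j.factorial : ℝ)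

lemma pochterm_eq (n j : ℕ) (hn : 1 ≤ n) : pochterm n j = Ft n j := by
  rcases lt_or_ge j n with hjn | hjn
  · obtain ⟨k, rfl⟩ : ∃ k, n = j + k + 1 := ⟨n - j - 1, by omega⟩
    have harg1 : (-((j+k+1:ℕ) : ℝ) + 1) = (-((j + k : ℕ)) : ℝ) := by push_cast; ring
    have harg2 : ((j+k+1:ℕ) : ℝ) = (((j+k)+1 : ℕ) : ℝ) := by push_cast; ring
    have harg3 : (-2 * ((j+k+1:ℕ) : ℝ) - 1) = (-((j + (j+2*k+3) : ℕ)) : ℝ) := by push_cast; ring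
    have e1 := asc_eval_neg j k
    have e2 := asc_eval_pos j (j+k)
    have e3 := asc_eval_neg j (j+2*k+3)
    rw [pochterm, harg1, harg2, harg3, Ft_eval]
    have k1 : ((k.factorial : ℝ)) ≠ 0 := fact_ne _
    have k2 : (((j+k).factorial : ℝ)) ≠ 0 := fact_ne _
    have k3 : (((j+2*k+3).factorial : ℝ)) ≠ 0 := fact_ne _
    have k4 : (((2*j+2*k+3).factorial : ℝ)) ≠ 0 := fact_ne _
    have k5 : (((2*j+k).factorial : ℝ)) ≠ 0 := fact_ne _
    have k6 : ((j.factorial : ℝ)) ≠ 0 := fact_ne _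
    have hm1 : ((-1 : ℝ))^j ≠ 0 := pow_ne_zero _ (by norm_num)
    have e1' : (ascPochhammer ℝ j).eval (-((j + k : ℕ)) : ℝ) = (-1)^j * ((j+k).factorial : ℝ) / (k.factorial : ℝ) := by
      rw [eq_div_iff k1]; exact e1
    have e2' : (ascPochhammer ℝ j).eval (((j+k)+1 : ℕ) : ℝ) = ((2*j+k).factorial : ℝ) / ((j+k).factorial : ℝ) := by
      rw [eq_div_iff k2]
      rw [show j+k+j = 2*j+k from by omega] at e2
      exact e2
    have e3' : (ascPochhammer ℝ j).eval (-((j + (j+2*k+3) : ℕ)) : ℝ) = (-1)^j * ((2*j+2*k+3).factorial : ℝ) / ((j+2*k+3).factorial : ℝ) := by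
      rw [eq_div_iff k3, show j+(j+2*k+3) = 2*j+2*k+3 from by omega]
      rw [show j+(j+2*k+3) = 2*j+2*k+3 from by omega] at e3
      exact e3
    rw [e1', e2', e3']
    rw [one_div, inv_pow]
    have h2j : ((2:ℝ))^j ≠ 0 := by positivity
    field_simp
  · have hz : (ascPochhammer ℝ j).eval (-(n : ℝ) + 1) = 0 := by
      have : (-(n : ℝ) + 1) = (-((n-1 : ℕ)) : ℝ) := by
        rw [Nat.cast_sub hn]; push_cast; ring
      rw [this]
      exact asc_eval_neg_zero j (n-1) (by omega)
    rw [pochterm, hz, Ft, if_neg (by omega)]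
    simp

noncomputable def Ssum (n : ℕ) : ℝ := ∑ j ∈ Finset.range n, Ft n j

lemma sum_rec (n : ℕ) (hn : 2 ≤ n) : aR n * Ssum (n+2) = bR n * Ssum n := by
  have hS2 : Ssum (n+2) = ∑ j ∈ Finset.range (n+2), Ft (n+2) j := rfl
  have hS : ∑ j ∈ Finset.range (n+2), Ft n j = Ssum n := by
    rw [show n + 2 = n + 2 from rfl, Finset.sum_range_succ, Finset.sum_range_succ,
      Ft, if_neg (by omega), Ft, if_neg (by omega)]
    simp [Ssum]
  have key : ∑ j ∈ Finset.range (n+2), (aR n * Ft (n+2) j - bR n * Ft n j)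
      = ∑ j ∈ Finset.range (n+2), (Gt n (j+1) - Gt n j) := by
    apply Finset.sum_congr rfl
    intro j hj
    have hj' := Finset.mem_range.mp hj
    exact cert n j hn (by omega)
  rw [Finset.sum_range_sub (fun j => Gt n j)] at key
  rw [Finset.sum_sub_distrib, ← Finset.mul_sum, ← Finset.mul_sum] at key
  rw [Gt_zero, Gt, if_neg (by omega)] at key
  rw [hS, ← hS2] at key
  linarith [key]

noncomputable def Rrhs (n : ℕ) : ℝ :=
  2 ^ (2 * n + 1) / Real.sqrt Real.pi *
    (Real.Gamma ((n : ℝ) / 2 + 3 / 2) * Real.Gamma (3 * (n : ℝ) / 2 + 1) /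
      Real.Gamma (2 * (n : ℝ) + 2))

lemma rhs_rec (n : ℕ) : aR n * Rrhs (n+2) = bR n * Rrhs n := by
  have hg1 : Real.Gamma (((n+2:ℕ):ℝ)/2 + 3/2) = ((n:ℝ)/2+3/2) * Real.Gamma ((n:ℝ)/2+3/2) := by
    rw [show ((n+2:ℕ):ℝ)/2+3/2 = ((n:ℝ)/2+3/2)+1 from by push_cast; ring,
      Real.Gamma_add_one (by positivity)]
  have hg2 : Real.Gamma (3*((n+2:ℕ):ℝ)/2+1) =
      (3*(n:ℝ)/2+3) * ((3*(n:ℝ)/2+2) * ((3*(n:ℝ)/2+1) * Real.Gamma (3*(n:ℝ)/2+1))) := by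
    rw [show 3*((n+2:ℕ):ℝ)/2+1 = ((3*(n:ℝ)/2+1)+1+1)+1 from by push_cast; ring,
      Real.Gamma_add_one (by positivity), Real.Gamma_add_one (by positivity),
      Real.Gamma_add_one (by positivity)]
    ring
  have hg3 : Real.Gamma (2*((n+2:ℕ):ℝ)+2) =
      (2*(n:ℝ)+5) * ((2*(n:ℝ)+4) * ((2*(n:ℝ)+3) * ((2*(n:ℝ)+2) * Real.Gamma (2*(n:ℝ)+2)))) := by
    rw [show 2*((n+2:ℕ):ℝ)+2 = (((2*(n:ℝ)+2)+1+1)+1)+1 from by push_cast; ring,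
      Real.Gamma_add_one (by positivity), Real.Gamma_add_one (by positivity),
      Real.Gamma_add_one (by positivity), Real.Gamma_add_one (by positivity)]
    ring
  have hpow : (2:ℝ) ^ (2*(n+2)+1) = 2 ^ (2*n+1) * 16 := by
    rw [show 2*(n+2)+1 = (2*n+1)+4 from by omega, pow_add]
    norm_num
  have hG3 : Real.Gamma (2*(n:ℝ)+2) ≠ 0 := (Real.Gamma_pos_of_pos (by positivity)).ne'
  have hsp : Real.sqrt Real.pi ≠ 0 := (Real.sqrt_pos.mpr Real.pi_pos).ne'
  have h2p : (2:ℝ) ^ (2*n+1) ≠ 0 := by positivity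
  rw [Rrhs, Rrhs, hg1, hg2, hg3, hpow, aR, bR]
  field_simp
  ring

lemma base2 : Ssum 2 = Rrhs 2 := by
  have g1 : Real.Gamma (((2:ℕ):ℝ)/2+3/2) = 3/4*Real.sqrt Real.pi := by
    rw [show ((2:ℕ):ℝ)/2+3/2 = (1/2+1)+1 from by norm_num,
      Real.Gamma_add_one (by norm_num), Real.Gamma_add_one (by norm_num),
      Real.Gamma_one_half_eq]
    ring
  have g2 : Real.Gamma (3*((2:ℕ):ℝ)/2+1) = 6 := by
    rw [show 3*((2:ℕ):ℝ)/2+1 = ((3:ℕ):ℝ)+1 from by norm_num, Real.Gamma_nat_eq_factorial]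
    norm_num [Nat.factorial]
  have g3 : Real.Gamma (2*((2:ℕ):ℝ)+2) = 120 := by
    rw [show 2*((2:ℕ):ℝ)+2 = ((5:ℕ):ℝ)+1 from by norm_num, Real.Gamma_nat_eq_factorial]
    norm_num [Nat.factorial]
  have hsp : Real.sqrt Real.pi ≠ 0 := (Real.sqrt_pos.mpr Real.pi_pos).ne'
  rw [Rrhs, g1, g2, g3]
  rw [Ssum, Finset.sum_range_succ, Finset.sum_range_succ, Finset.sum_range_zero]
  rw [Ft, if_pos (by omega), Ft, if_pos (by omega)]
  norm_num [Nat.factorial]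
  field_simp
  ring

lemma base3 : Ssum 3 = Rrhs 3 := by
  have g1 : Real.Gamma (((3:ℕ):ℝ)/2+3/2) = 2 := by
    rw [show ((3:ℕ):ℝ)/2+3/2 = ((2:ℕ):ℝ)+1 from by norm_num, Real.Gamma_nat_eq_factorial]
    norm_num [Nat.factorial]
  have g2 : Real.Gamma (3*((3:ℕ):ℝ)/2+1) = 945/32*Real.sqrt Real.pi := by
    rw [show 3*((3:ℕ):ℝ)/2+1 = ((((1/2+1)+1)+1)+1)+1 from by norm_num,
      Real.Gamma_add_one (by norm_num), Real.Gamma_add_one (by norm_num),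
      Real.Gamma_add_one (by norm_num), Real.Gamma_add_one (by norm_num),
      Real.Gamma_add_one (by norm_num), Real.Gamma_one_half_eq]
    ring
  have g3 : Real.Gamma (2*((3:ℕ):ℝ)+2) = 5040 := by
    rw [show 2*((3:ℕ):ℝ)+2 = ((7:ℕ):ℝ)+1 from by norm_num, Real.Gamma_nat_eq_factorial]
    norm_num [Nat.factorial]
  have hsp : Real.sqrt Real.pi ≠ 0 := (Real.sqrt_pos.mpr Real.pi_pos).ne'
  rw [Rrhs, g1, g2, g3]
  rw [Ssum, Finset.sum_range_succ, Finset.sum_range_succ, Finset.sum_range_succ,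
    Finset.sum_range_zero]
  rw [Ft, if_pos (by omega), Ft, if_pos (by omega), Ft, if_pos (by omega)]
  norm_num [Nat.factorial]
  field_simp
  ring

lemma main : ∀ n, 2 ≤ n → Ssum n = Rrhs n := by
  have step : ∀ n, 2 ≤ n → Ssum n = Rrhs n → Ssum (n+2) = Rrhs (n+2) := by
    intro n hn h
    have ha : aR n ≠ 0 := by rw [aR]; positivity
    have h1 := sum_rec n hn
    have h2 := rhs_rec n
    rw [h] at h1
    exact mul_left_cancel₀ ha (h1.trans h2.symm)
  intro n
  induction n using Nat.strong_induction_on with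
  | _ n ih =>
    intro hn
    rcases (show n = 2 ∨ n = 3 ∨ 4 ≤ n from by omega) with rfl | rfl | h4
    · exact base2
    · exact base3
    · obtain ⟨m, rfl⟩ : ∃ m, n = m+2 := ⟨n-2, by omega⟩
      exact step m (by omega) (ih m (by omega) (by omega))

theorem stmt_13 (n : ℕ) (hn : 2 ≤ n) :
    (∑ j ∈ Finset.range n,
        ((ascPochhammer ℝ j).eval (-(n : ℝ) + 1) * (ascPochhammer ℝ j).eval (n : ℝ) /
            (ascPochhammer ℝ j).eval (-2 * (n : ℝ) - 1)) *
          (1 / 2 : ℝ) ^ j / (j.factorial : ℝ)) =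
      2 ^ (2 * n + 1) / Real.sqrt Real.pi *
        (Real.Gamma ((n : ℝ) / 2 + 3 / 2) * Real.Gamma (3 * (n : ℝ) / 2 + 1) /
          Real.Gamma (2 * (n : ℝ) + 2)) := by
  calc (∑ j ∈ Finset.range n,
        ((ascPochhammer ℝ j).eval (-(n : ℝ) + 1) * (ascPochhammer ℝ j).eval (n : ℝ) /
            (ascPochhammer ℝ j).eval (-2 * (n : ℝ) - 1)) *
          (1 / 2 : ℝ) ^ j / (j.factorial : ℝ))
      = Ssum n := Finset.sum_congr rfl (fun j _ => pochterm_eq n j (by omega))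
    _ = Rrhs n := main n hn
    _ = _ := rfl
end

section
/- For every β > 0, ∫₀^∞ (2πu⁵)^{−1/2} e^{−1/(2u)} e^{−βu} du = (1 + √(2β))·e^{−√(2β)}. -/
open MeasureTheory

open Real Set

lemma hd_phi (c : ℝ) {t : ℝ} (ht : t ∈ Ioi (0:ℝ)) :
    HasDerivWithinAt (fun t : ℝ => t - c / t) (1 + c / t ^ 2) (Ioi 0) t := by
  have h1 : HasDerivAt (fun t : ℝ => c / t) (c * (-(t ^ 2)⁻¹)) t := by
    simpa [div_eq_mul_inv] using (hasDerivAt_inv (ne_of_gt (mem_Ioi.mp ht))).const_mul c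
  have h := (hasDerivAt_id t).sub h1
  have h2 : HasDerivAt (fun t : ℝ => t - c / t) (1 + c / t ^ 2) t := by
    refine h.congr_deriv ?_
    ring
  exact h2.hasDerivWithinAt

lemma injOn_phi {c : ℝ} (hc : 0 < c) : InjOn (fun t : ℝ => t - c / t) (Ioi 0) := by
  have : StrictMonoOn (fun t : ℝ => t - c / t) (Ioi 0) := by
    intro a ha b hb hab
    have h1 : c / b < c / a := div_lt_div_of_pos_left hc (mem_Ioi.mp ha) hab
    exact sub_lt_sub hab h1
  exact this.injOn

lemma image_phi {c : ℝ} (hc : 0 < c) : (fun t : ℝ => t - c / t) '' (Ioi 0) = univ := by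
  apply eq_univ_of_forall
  intro s
  set r := Real.sqrt (s ^ 2 + 4 * c) with hr
  have hr2 : r ^ 2 = s ^ 2 + 4 * c := Real.sq_sqrt (by positivity)
  have hr0 : 0 ≤ r := Real.sqrt_nonneg _
  have hrs : 0 < r - s := by nlinarith [hc, hr2, hr0]
  have hts : 0 < (s + r) / 2 := by nlinarith [hc, hr2, hrs]
  refine ⟨(s + r) / 2, hts, ?_⟩
  have hne : (s + r) / 2 ≠ 0 := ne_of_gt hts
  have hne2 : s + r ≠ 0 := by nlinarith [hts]
  field_simp
  ring_nf
  linear_combination hr2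

lemma subst_phi {c : ℝ} (hc : 0 < c) (g : ℝ → ℝ) :
    ∫ s : ℝ, g s = ∫ t in Ioi (0:ℝ), (1 + c / t ^ 2) * g (t - c / t) := by
  have h := integral_image_eq_integral_abs_deriv_smul measurableSet_Ioi
    (fun t ht => hd_phi c ht) (injOn_phi hc) g
  rw [image_phi hc, setIntegral_univ] at h
  rw [h]
  refine setIntegral_congr_fun measurableSet_Ioi (fun t ht => ?_)
  have ht0 : (0:ℝ) < t := ht
  rw [smul_eq_mul, abs_of_pos (by positivity)]

lemma integrableOn_phi {c : ℝ} (hc : 0 < c) {g : ℝ → ℝ} (hg : Integrable g) :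
    IntegrableOn (fun t => (1 + c / t ^ 2) * g (t - c / t)) (Ioi (0:ℝ)) := by
  have h := (integrableOn_image_iff_integrableOn_abs_deriv_smul measurableSet_Ioi
    (fun t ht => hd_phi c ht) (injOn_phi hc) g).mp (by rw [image_phi hc, integrableOn_univ]; exact hg)
  refine h.congr_fun (fun t ht => ?_) measurableSet_Ioi
  have ht0 : (0:ℝ) < t := ht
  beta_reduce
  rw [smul_eq_mul, abs_of_pos (by positivity)]

lemma subst_inv {c : ℝ} (hc : 0 < c) (g : ℝ → ℝ) :
    ∫ t in Ioi (0:ℝ), g t = ∫ t in Ioi (0:ℝ), (c / t ^ 2) * g (c / t) := by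
  have himg : (fun t : ℝ => c / t) '' (Ioi 0) = Ioi 0 := by
    ext u
    constructor
    · rintro ⟨t, ht, rfl⟩
      exact div_pos hc ht
    · intro hu
      exact ⟨c / u, div_pos hc hu, by field_simp⟩
  have hderiv : ∀ t ∈ Ioi (0:ℝ), HasDerivWithinAt (fun t : ℝ => c / t) (-(c / t ^ 2)) (Ioi 0) t := by
    intro t ht
    have h1 : HasDerivAt (fun t : ℝ => c / t) (c * (-(t ^ 2)⁻¹)) t := by
      simpa [div_eq_mul_inv] using (hasDerivAt_inv (ne_of_gt (mem_Ioi.mp ht))).const_mul c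
    have h2 : HasDerivAt (fun t : ℝ => c / t) (-(c / t ^ 2)) t := by
      convert h1 using 1; field_simp
    exact h2.hasDerivWithinAt
  have hinj : InjOn (fun t : ℝ => c / t) (Ioi 0) := by
    intro a ha b hb hab
    have ha0 : (0:ℝ) < a := ha
    have hb0 : (0:ℝ) < b := hb
    field_simp at hab
    exact hab.symm
  have h := integral_image_eq_integral_abs_deriv_smul measurableSet_Ioi hderiv hinj g
  rw [himg] at h
  rw [h]
  refine setIntegral_congr_fun measurableSet_Ioi (fun t ht => ?_)
  have ht0 : (0:ℝ) < t := ht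
  rw [smul_eq_mul, abs_neg, abs_of_pos (by positivity)]

lemma gauss0 : ∫ s : ℝ, rexp (-s ^ 2) = √π := by
  have := integral_gaussian 1
  simpa using this

lemma gauss2 : ∫ s : ℝ, s ^ 2 * rexp (-s ^ 2) = √π / 2 := by
  have habs : ∫ s : ℝ, s ^ 2 * rexp (-s ^ 2) = ∫ s : ℝ, |s| ^ 2 * rexp (-|s| ^ 2) := by
    congr 1; ext s; rw [sq_abs]
  have h2 : ∫ x in Ioi (0:ℝ), x ^ 2 * rexp (-x ^ 2) = 1 / 2 * Real.Gamma (3 / 2) := by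
    have := integral_rpow_mul_exp_neg_rpow (p := 2) (q := 2) two_pos (by norm_num)
    rw [show ((2:ℝ) + 1) / 2 = 3 / 2 by norm_num] at this
    rw [← this]
    refine setIntegral_congr_fun measurableSet_Ioi (fun t ht => ?_)
    show t ^ (2:ℕ) * rexp (-t ^ (2:ℕ)) = t ^ (2:ℝ) * rexp (-t ^ (2:ℝ))
    rw [rpow_two]
  have hGamma : Real.Gamma (3 / 2) = 1 / 2 * √π := by
    rw [show (3:ℝ)/2 = 1/2 + 1 by norm_num, Real.Gamma_add_one (by norm_num),
      Real.Gamma_one_half_eq]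
  rw [habs, integral_comp_abs (f := fun x => x ^ 2 * rexp (-x ^ 2)), h2, hGamma]
  ring

lemma contOn_E (c : ℝ) : ContinuousOn (fun t : ℝ => rexp (-(t - c / t) ^ 2)) (Ioi 0) := by
  have h : ContinuousOn (fun t : ℝ => -(t - c / t) ^ 2) (Ioi 0) :=
    ((continuousOn_id.sub (continuousOn_const.div continuousOn_id fun t ht =>
      ne_of_gt (mem_Ioi.mp ht))).pow 2).neg
  exact Real.continuous_exp.comp_continuousOn h

lemma K1_eval {c : ℝ} (hc : 0 < c) :
    ∫ t in Ioi (0:ℝ), t ^ 2 * rexp (-(t - c / t) ^ 2) = √π / 4 + c * √π / 2 := by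
  set E : ℝ → ℝ := fun t => rexp (-(t - c / t) ^ 2) with hE
  have hcontE : ContinuousOn E (Ioi 0) := contOn_E c
  have hg1 : Integrable fun s : ℝ => rexp (-s ^ 2) := by
    simpa using integrable_exp_neg_mul_sq one_pos
  have hg2 : Integrable fun s : ℝ => s ^ 2 * rexp (-s ^ 2) := by
    have := integrable_rpow_mul_exp_neg_mul_sq one_pos (s := 2) (by norm_num)
    simpa [rpow_two] using this
  have hInt1 : IntegrableOn (fun t => (1 + c / t ^ 2) * E t) (Ioi 0) := by
    have h := integrableOn_phi hc hg1
    simpa [hE] using h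
  have hInt2 : IntegrableOn (fun t => (1 + c / t ^ 2) * ((t - c / t) ^ 2 * E t)) (Ioi 0) := by
    have h := integrableOn_phi hc hg2
    simpa [hE] using h
  have hL1 : ∫ t in Ioi (0:ℝ), (1 + c / t ^ 2) * E t = √π := by
    have h := subst_phi hc (fun s => rexp (-s ^ 2))
    rw [hE, ← h]
    exact gauss0
  have hL2 : ∫ t in Ioi (0:ℝ), (1 + c / t ^ 2) * ((t - c / t) ^ 2 * E t) = √π / 2 := by
    have h := subst_phi hc (fun s => s ^ 2 * rexp (-s ^ 2))
    rw [hE, ← h]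
    exact gauss2
  have hIntG : IntegrableOn (fun t => (t ^ 2 + c ^ 3 / t ^ 4) * E t) (Ioi 0) := by
    refine Integrable.congr (hInt2.add (hInt1.const_mul c)) ?_
    filter_upwards [ae_restrict_mem measurableSet_Ioi] with t ht
    have ht0 : t ≠ 0 := ne_of_gt (mem_Ioi.mp ht)
    show (1 + c / t ^ 2) * ((t - c / t) ^ 2 * E t) + c * ((1 + c / t ^ 2) * E t) = (t ^ 2 + c ^ 3 / t ^ 4) * E t
    field_simp
    ring
  have hG : ∫ t in Ioi (0:ℝ), (t ^ 2 + c ^ 3 / t ^ 4) * E t = √π / 2 + c * √π := by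
    have heq : ∫ t in Ioi (0:ℝ), (t ^ 2 + c ^ 3 / t ^ 4) * E t
        = ∫ t in Ioi (0:ℝ), ((1 + c / t ^ 2) * ((t - c / t) ^ 2 * E t)
            + c * ((1 + c / t ^ 2) * E t)) := by
      refine setIntegral_congr_fun measurableSet_Ioi (fun t ht => ?_)
      have ht0 : t ≠ 0 := ne_of_gt (mem_Ioi.mp ht)
      field_simp
      ring
    rw [heq, integral_add hInt2 (hInt1.const_mul c), hL2, MeasureTheory.integral_const_mul, hL1]
  have hIntK1 : IntegrableOn (fun t => t ^ 2 * E t) (Ioi 0) := by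
    refine Integrable.mono' hIntG
      (((continuousOn_id.pow 2).mul hcontE).aestronglyMeasurable measurableSet_Ioi) ?_
    filter_upwards [ae_restrict_mem measurableSet_Ioi] with t ht
    have ht0 : (0:ℝ) < t := mem_Ioi.mp ht
    have hE0 : 0 ≤ E t := le_of_lt (exp_pos _)
    rw [Real.norm_eq_abs, abs_of_nonneg (by positivity)]
    have h1 : 0 ≤ (c ^ 3 / t ^ 4) * E t := by positivity
    nlinarith [h1]
  have hIntK2 : IntegrableOn (fun t => (c ^ 3 / t ^ 4) * E t) (Ioi 0) := by
    refine Integrable.mono' hIntG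
      (((continuousOn_const.div (continuousOn_id.pow 4) fun t ht =>
        pow_ne_zero 4 (ne_of_gt (mem_Ioi.mp ht))).mul hcontE).aestronglyMeasurable
        measurableSet_Ioi) ?_
    filter_upwards [ae_restrict_mem measurableSet_Ioi] with t ht
    have ht0 : (0:ℝ) < t := mem_Ioi.mp ht
    have hE0 : 0 ≤ E t := le_of_lt (exp_pos _)
    rw [Real.norm_eq_abs, abs_of_nonneg (by positivity)]
    have h1 : 0 ≤ t ^ 2 * E t := by positivity
    nlinarith [h1]
  have hK12 : ∫ t in Ioi (0:ℝ), t ^ 2 * E t = ∫ t in Ioi (0:ℝ), (c ^ 3 / t ^ 4) * E t := by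
    have h := subst_inv hc (fun t => t ^ 2 * E t)
    rw [h]
    refine setIntegral_congr_fun measurableSet_Ioi (fun t ht => ?_)
    have ht0 : (0:ℝ) < t := mem_Ioi.mp ht
    have hcc : c / (c / t) = t := by field_simp
    simp only [hE, hcc]
    rw [show c / t - t = -(t - c / t) by ring, neg_sq]
    field_simp
  have hsplit : ∫ t in Ioi (0:ℝ), (t ^ 2 + c ^ 3 / t ^ 4) * E t
      = (∫ t in Ioi (0:ℝ), t ^ 2 * E t) + ∫ t in Ioi (0:ℝ), (c ^ 3 / t ^ 4) * E t := by
    rw [← integral_add hIntK1 hIntK2]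
    refine setIntegral_congr_fun measurableSet_Ioi (fun t ht => ?_)
    ring
  have : (2:ℝ) * ∫ t in Ioi (0:ℝ), t ^ 2 * E t = √π / 2 + c * √π := by
    rw [← hG, hsplit, ← hK12]; ring
  linarith [this]

theorem stmt_18 (β : ℝ) (hβ : 0 < β) :
    ∫ u in Set.Ioi (0 : ℝ),
        (2 * Real.pi * u ^ 5) ^ (-(1 / 2) : ℝ) * Real.exp (-1 / (2 * u)) * Real.exp (-β * u) =
      (1 + Real.sqrt (2 * β)) * Real.exp (-Real.sqrt (2 * β)) := by
  have hπ : (0:ℝ) < √π := Real.sqrt_pos.mpr pi_pos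
  set c : ℝ := √β / √2 with hcdef
  have hc : 0 < c := div_pos (Real.sqrt_pos.mpr hβ) (Real.sqrt_pos.mpr two_pos)
  have hc2 : β = 2 * c ^ 2 := by
    rw [hcdef, div_pow, Real.sq_sqrt hβ.le, Real.sq_sqrt two_pos.le]
    ring
  have h2c : √(2 * β) = 2 * c := by
    rw [Real.sqrt_mul two_pos.le, hcdef]
    have h22 : (√2:ℝ) * √2 = 2 := Real.mul_self_sqrt two_pos.le
    have h20 : (√2:ℝ) ≠ 0 := ne_of_gt (Real.sqrt_pos.mpr two_pos)
    field_simp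
    linear_combination h22
  -- change of variables u = (2 t^2)⁻¹
  have himg : (fun t : ℝ => (2 * t ^ 2)⁻¹) '' (Ioi 0) = Ioi 0 := by
    ext u
    constructor
    · rintro ⟨t, ht, rfl⟩
      have ht0 : (0:ℝ) < t := ht
      exact mem_Ioi.mpr (by positivity)
    · intro hu
      have hu0 : (0:ℝ) < u := hu
      refine ⟨(√(2 * u))⁻¹, mem_Ioi.mpr (by positivity), ?_⟩
      obtain ⟨r, hr⟩ : ∃ r, r = √(2 * u) := ⟨_, rfl⟩
      have h2u : r ^ 2 = 2 * u := by rw [hr]; exact Real.sq_sqrt (by positivity)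
      have hne : r ≠ 0 := by rw [hr]; exact ne_of_gt (Real.sqrt_pos.mpr (by positivity))
      rw [← hr]
      field_simp
      linear_combination h2u
  have hderiv : ∀ t ∈ Ioi (0:ℝ),
      HasDerivWithinAt (fun t : ℝ => (2 * t ^ 2)⁻¹) (-(t ^ 3)⁻¹) (Ioi 0) t := by
    intro t ht
    have ht0 : (0:ℝ) < t := ht
    have h1 : HasDerivAt (fun t : ℝ => 2 * t ^ 2) (2 * (2 * t ^ 1)) t :=
      (hasDerivAt_pow 2 t).const_mul 2
    have h2 := h1.inv (by positivity)
    have h3 : HasDerivAt (fun t : ℝ => (2 * t ^ 2)⁻¹) (-(t ^ 3)⁻¹) t := by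
      refine h2.congr_deriv ?_
      field_simp
    exact h3.hasDerivWithinAt
  have hinj : InjOn (fun t : ℝ => (2 * t ^ 2)⁻¹) (Ioi 0) := by
    intro a ha b hb hab
    have ha0 : (0:ℝ) < a := ha
    have hb0 : (0:ℝ) < b := hb
    have h2 : 2 * a ^ 2 = 2 * b ^ 2 := inv_injective hab
    exact le_antisymm (by nlinarith) (by nlinarith)
  have h := integral_image_eq_integral_abs_deriv_smul measurableSet_Ioi hderiv hinj
    (fun u => (2 * π * u ^ 5) ^ (-(1 / 2) : ℝ) * rexp (-1 / (2 * u)) * rexp (-β * u))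
  rw [himg] at h
  rw [h]
  have hpt : ∀ t ∈ Ioi (0:ℝ),
      |(-(t ^ 3)⁻¹)| • ((2 * π * ((2 * t ^ 2)⁻¹) ^ 5) ^ (-(1 / 2) : ℝ)
          * rexp (-1 / (2 * (2 * t ^ 2)⁻¹)) * rexp (-β * (2 * t ^ 2)⁻¹))
        = (4 * rexp (-(2 * c)) / √π) * (t ^ 2 * rexp (-(t - c / t) ^ 2)) := by
    intro t ht
    have ht0 : (0:ℝ) < t := ht
    have habs : |(-(t ^ 3)⁻¹)| = (t ^ 3)⁻¹ := by
      rw [abs_neg, abs_of_pos (by positivity)]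
    have hbase : 2 * π * ((2 * t ^ 2)⁻¹) ^ 5 = (√π / (4 * t ^ 5)) ^ 2 := by
      have hπ2 : (√π) ^ 2 = π := Real.sq_sqrt pi_pos.le
      rw [div_pow, hπ2]
      field_simp
      ring
    have hrpow : ((√π / (4 * t ^ 5)) ^ 2 : ℝ) ^ (-(1 / 2) : ℝ) = 4 * t ^ 5 / √π := by
      rw [← Real.rpow_natCast (√π / (4 * t ^ 5)) 2, ← Real.rpow_mul (by positivity)]
      norm_num
      rw [Real.rpow_neg_one, inv_div]
    have hexp1 : -1 / (2 * (2 * t ^ 2)⁻¹) = -t ^ 2 := by field_simp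
    have hexp2 : -β * (2 * t ^ 2)⁻¹ = -(c ^ 2 / t ^ 2) := by
      rw [hc2]; field_simp
    have hsq : (t - c / t) ^ 2 = t ^ 2 - 2 * c + c ^ 2 / t ^ 2 := by
      field_simp
      ring
    have key : rexp (-t ^ 2) * rexp (-(c ^ 2 / t ^ 2))
        = rexp (-(2 * c)) * rexp (-(t - c / t) ^ 2) := by
      rw [← Real.exp_add, ← Real.exp_add, hsq]
      ring_nf
    rw [smul_eq_mul, habs, hbase, hrpow, hexp1, hexp2,
      mul_assoc (4 * t ^ 5 / √π), key]
    field_simp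
  rw [setIntegral_congr_fun measurableSet_Ioi hpt, MeasureTheory.integral_const_mul,
    K1_eval hc, h2c]
  field_simp
  ring
end
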